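/- arXiv:2208.00290 — 6 statements merged into one kernel-verified Lean document; each statement's English description precedes it below -/
import Mathlib

section
/- Let d ≥ 1 and let u be a random vector in ℝ^d distributed with the unit-scale truncated Cauchy density h. Then for every positive integer r, E_u[‖u‖^{2r}] ≤ c₁₁/(r + d), where c₁₁ = 2Γ((d+1)/2)/(√π · Γ(d/2) · c₁). -/
open MeasureTheory Real Filter Topology ProbabilityTheory

/-- The truncated (to the `δ`-sphere) Cauchy density on `ℝ^d`, with normalizing
constant `c₁`: `h_δ(u) = Γ((d+1)/2)/(π^((d+1)/2) c₁ δ^d) · (1+‖u‖²/δ²)^(-(d+1)/2)`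
for `‖u‖ ≤ δ` and `0` otherwise. -/
noncomputable def truncCauchy (d : ℕ) (c₁ δ : ℝ) (u : EuclideanSpace ℝ (Fin d)) : ℝ :=
  if ‖u‖ ≤ δ then
    Real.Gamma (((d : ℝ) + 1) / 2) / (Real.pi ^ (((d : ℝ) + 1) / 2) * c₁ * δ ^ d) *
      (1 + ‖u‖ ^ 2 / δ ^ 2) ^ (-(((d : ℝ) + 1) / 2))
  else 0

/-- The unit-scale truncated Cauchy probability measure on `ℝ^d`. -/
noncomputable def truncCauchyMeasure (d : ℕ) (c₁ : ℝ) : Measure (EuclideanSpace ℝ (Fin d)) :=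
  volume.withDensity fun v => ENNReal.ofReal (truncCauchy d c₁ 1 v)
/-- Moment bound for the unit-scale truncated Cauchy distribution:
`E[‖u‖^(2r)] ≤ c₁₁/(r+d)` with `c₁₁ = 2Γ((d+1)/2)/(√π·Γ(d/2)·c₁)`. -/
theorem truncCauchy_moment_bound
    (d : ℕ) (hd : 0 < d) (c₁ : ℝ) (hc₁ : 0 < c₁)
    (hnorm : ∫ u : EuclideanSpace ℝ (Fin d), truncCauchy d c₁ 1 u = 1)
    (c₁₁ : ℝ)
    (hc₁₁ : c₁₁ = 2 * Real.Gamma (((d : ℝ) + 1) / 2) /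
      (Real.sqrt Real.pi * Real.Gamma ((d : ℝ) / 2) * c₁))
    (r : ℕ) (hr : 1 ≤ r) :
    (∫ u : EuclideanSpace ℝ (Fin d), truncCauchy d c₁ 1 u * ‖u‖ ^ (2 * r))
      ≤ c₁₁ / ((r : ℝ) + (d : ℝ)) := by
  clear hnorm
  haveI : Nonempty (Fin d) := ⟨⟨0, hd⟩⟩
  set p : ℝ := ((d : ℝ) + 1) / 2 with hp
  set C : ℝ := Real.Gamma p / (Real.pi ^ p * c₁) with hC
  have hπp : (0 : ℝ) < Real.pi ^ p := Real.rpow_pos_of_pos Real.pi_pos _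
  have hppos : (0 : ℝ) < p := by
    have : (0:ℝ) < (d:ℝ) + 1 := by positivity
    positivity
  have hΓp : 0 < Real.Gamma p := Real.Gamma_pos_of_pos hppos
  have hCpos : 0 < C := div_pos hΓp (by positivity)
  have hd2 : (0:ℝ) < (d:ℝ) / 2 := by
    have : (0:ℝ) < (d:ℝ) := by exact_mod_cast hd
    positivity
  have hΓd2 : 0 < Real.Gamma ((d:ℝ)/2) := Real.Gamma_pos_of_pos hd2
  set g : ℝ → ℝ := fun t => (if t ≤ 1 then C * (1 + t ^ 2) ^ (-p) else 0) * t ^ (2 * r)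
    with hg
  have hint : ∀ u : EuclideanSpace ℝ (Fin d),
      truncCauchy d c₁ 1 u * ‖u‖ ^ (2 * r) = g ‖u‖ := by
    intro u
    simp only [truncCauchy, hg, one_pow, div_one, mul_one, hC, hp]
  rw [show (∫ u : EuclideanSpace ℝ (Fin d), truncCauchy d c₁ 1 u * ‖u‖ ^ (2 * r))
      = ∫ u : EuclideanSpace ℝ (Fin d), g ‖u‖ from by simp_rw [hint]]
  rw [MeasureTheory.integral_fun_norm_addHaar volume g, finrank_euclideanSpace_fin]
  simp only [nsmul_eq_mul, smul_eq_mul]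
  -- the radial integral
  set F : ℝ → ℝ := fun y => y ^ (d - 1) * g y with hF
  have hgzero : ∀ y ∈ Set.Ioi (0:ℝ) \ Set.Ioc (0:ℝ) 1, F y = 0 := by
    intro y hy
    have h1 : 1 < y := by
      rcases hy with ⟨hy1, hy2⟩
      by_contra h
      exact hy2 ⟨hy1, le_of_not_gt h⟩
    simp only [hF, hg, if_neg (not_le.mpr h1), zero_mul, mul_zero]
  have hstep1 : (∫ y in Set.Ioi (0:ℝ), F y) = ∫ y in Set.Ioc (0:ℝ) 1, F y :=
    setIntegral_eq_of_subset_of_ae_diff_eq_zero measurableSet_Ioi.nullMeasurableSet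
      Set.Ioc_subset_Ioi_self (Filter.Eventually.of_forall hgzero)
  have hstep2 : (∫ y in Set.Ioc (0:ℝ) 1, F y)
      = ∫ y in Set.Ioc (0:ℝ) 1, y ^ (d - 1) * (C * (1 + y ^ 2) ^ (-p)) * y ^ (2 * r) := by
    refine setIntegral_congr_fun measurableSet_Ioc fun y hy => ?_
    simp only [hF, hg, if_pos hy.2]
    ring
  have hcont1 : Continuous fun y : ℝ => y ^ (d - 1) * (C * (1 + y ^ 2) ^ (-p)) * y ^ (2 * r) := by
    refine ((continuous_pow _).mul (continuous_const.mul ?_)).mul (continuous_pow _)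
    exact (continuous_const.add (continuous_pow 2)).rpow_const fun y => Or.inl (ne_of_gt (show (0:ℝ) < 1 + y ^ 2 by positivity))
  have hcont2 : Continuous fun y : ℝ => C * y ^ (2 * r + (d - 1)) :=
    continuous_const.mul (continuous_pow _)
  have hstep3 : (∫ y in Set.Ioc (0:ℝ) 1, y ^ (d - 1) * (C * (1 + y ^ 2) ^ (-p)) * y ^ (2 * r))
      ≤ ∫ y in Set.Ioc (0:ℝ) 1, C * y ^ (2 * r + (d - 1)) := by
    refine setIntegral_mono_on (hcont1.integrableOn_Ioc) (hcont2.integrableOn_Ioc)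
      measurableSet_Ioc fun y hy => ?_
    have hy0 : 0 ≤ y := hy.1.le
    have ht0 : 0 ≤ (1 + y ^ 2) ^ (-p) := Real.rpow_nonneg (by positivity) _
    have ht1 : (1 + y ^ 2) ^ (-p) ≤ 1 :=
      Real.rpow_le_one_of_one_le_of_nonpos (by nlinarith) (by linarith)
    have h1 : y ^ (d - 1) * (C * (1 + y ^ 2) ^ (-p)) * y ^ (2 * r)
        ≤ y ^ (d - 1) * (C * 1) * y ^ (2 * r) := by
      have := mul_le_mul_of_nonneg_left ht1 hCpos.le
      have h2 : (0:ℝ) ≤ y ^ (d-1) := by positivity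
      have h3 : (0:ℝ) ≤ y ^ (2*r) := by positivity
      exact mul_le_mul_of_nonneg_right (mul_le_mul_of_nonneg_left this h2) h3
    calc y ^ (d - 1) * (C * (1 + y ^ 2) ^ (-p)) * y ^ (2 * r)
        ≤ y ^ (d - 1) * (C * 1) * y ^ (2 * r) := h1
      _ = C * y ^ (2 * r + (d - 1)) := by rw [pow_add]; ring
  have hstep4 : (∫ y in Set.Ioc (0:ℝ) 1, C * y ^ (2 * r + (d - 1)))
      = C * (1 / ((2 * r + (d - 1) : ℕ) + 1 : ℝ)) := by
    rw [← intervalIntegral.integral_of_le zero_le_one, intervalIntegral.integral_const_mul,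
      integral_pow]
    norm_num
  have hFbound : (∫ y in Set.Ioi (0:ℝ), F y)
      ≤ C * (1 / ((2 * r + (d - 1) : ℕ) + 1 : ℝ)) := by
    rw [hstep1, hstep2]; rw [← hstep4] at *; exact hstep3
  -- volume of the unit ball
  have hvol : (volume (Metric.ball (0 : EuclideanSpace ℝ (Fin d)) 1)).toReal
      = Real.sqrt Real.pi ^ d / Real.Gamma ((d:ℝ) / 2 + 1) := by
    rw [EuclideanSpace.volume_ball, Fintype.card_fin]
    rw [ENNReal.ofReal_one, one_pow, one_mul, ENNReal.toReal_ofReal]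
    positivity
  have hvolpos : 0 < Real.sqrt Real.pi ^ d / Real.Gamma ((d:ℝ) / 2 + 1) := by
    have := Real.Gamma_pos_of_pos (show (0:ℝ) < (d:ℝ)/2 + 1 by positivity)
    positivity
  have hm : ((2 * r + (d - 1) : ℕ) + 1 : ℝ) = 2 * (r:ℝ) + (d:ℝ) := by
    have : (2 * r + (d - 1) : ℕ) + 1 = 2 * r + d := by omega
    exact_mod_cast congrArg (Nat.cast : ℕ → ℝ) this
  -- combine
  calc (d:ℝ) * ((volume (Metric.ball (0 : EuclideanSpace ℝ (Fin d)) 1)).toReal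
        * ∫ y in Set.Ioi (0:ℝ), y ^ (d - 1) * g y)
      ≤ (d:ℝ) * ((Real.sqrt Real.pi ^ d / Real.Gamma ((d:ℝ) / 2 + 1))
        * (C * (1 / (2 * (r:ℝ) + (d:ℝ))))) := by
        rw [hvol, ← hm]
        have hd0 : (0:ℝ) ≤ (d:ℝ) := Nat.cast_nonneg d
        exact mul_le_mul_of_nonneg_left (mul_le_mul_of_nonneg_left hFbound hvolpos.le) hd0
    _ = c₁₁ / (2 * (r:ℝ) + (d:ℝ)) := by
        have h1 : Real.sqrt Real.pi ^ d = Real.pi ^ ((d:ℝ)/2) := by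
          rw [Real.sqrt_eq_rpow, ← Real.rpow_natCast (Real.pi ^ (1/(2:ℝ))) d,
            ← Real.rpow_mul Real.pi_pos.le]
          congr 1; ring
        have h2 : Real.pi ^ p = Real.pi ^ ((d:ℝ)/2) * Real.sqrt Real.pi := by
          rw [Real.sqrt_eq_rpow, ← Real.rpow_add Real.pi_pos]
          congr 1; rw [hp]; ring
        have h3 : Real.Gamma ((d:ℝ)/2 + 1) = ((d:ℝ)/2) * Real.Gamma ((d:ℝ)/2) :=
          Real.Gamma_add_one hd2.ne'
        have hπd2 : (0:ℝ) < Real.pi ^ ((d:ℝ)/2) := Real.rpow_pos_of_pos Real.pi_pos _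
        have hsπ : (0:ℝ) < Real.sqrt Real.pi := Real.sqrt_pos.mpr Real.pi_pos
        have hdR : (0:ℝ) < (d:ℝ) := by exact_mod_cast hd
        have hrd : (0:ℝ) < 2 * (r:ℝ) + (d:ℝ) := by positivity
        rw [hc₁₁, hC, h1, h2, h3]
        field_simp
    _ ≤ c₁₁ / ((r:ℝ) + (d:ℝ)) := by
        have hc₁₁pos : 0 ≤ c₁₁ := by
          rw [hc₁₁]; positivity
        have hrd : (0:ℝ) < (r:ℝ) + (d:ℝ) := by
          have : (0:ℝ) < (d:ℝ) := by exact_mod_cast hd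
          positivity
        apply div_le_div_of_nonneg_left hc₁₁pos hrd
        have : (0:ℝ) ≤ (r:ℝ) := Nat.cast_nonneg r
        linarith
end

section
/- Let d ≥ 1 and let f : ℝ^d → ℝ be twice continuously differentiable with ‖∇²f(x)‖ ≤ B for all x, where B ≥ 0. Fix x ∈ ℝ^d and δ > 0, let u be distributed with the unit-scale truncated Cauchy density h, and let η be a real random variable with E[η | u] = 0 and E|η| < ∞. Define the gradient estimator G = ((f(x + δu) − f(x) + η)/δ) · (d+1)u/(1+‖u‖²). Then there exists w ∈ ℝ^d with ‖w‖ ≤ (d+1)B/2 such that E[G] = c₂·∇f(x) + δ·w, where c₂ = E_u[(d+1)u₁²/(1+‖u‖²)]. -/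
open MeasureTheory Real Filter Topology ProbabilityTheory

namespace TCAux

variable {d : ℕ} {c₁ : ℝ}

lemma truncCauchy_nonneg (hc₁ : 0 < c₁) (v : EuclideanSpace ℝ (Fin d)) :
    0 ≤ truncCauchy d c₁ 1 v := by
  unfold truncCauchy
  split
  · have h1 : 0 < Real.Gamma (((d : ℝ) + 1) / 2) := Real.Gamma_pos_of_pos (by positivity)
    have h2 : (0:ℝ) < Real.pi ^ (((d : ℝ) + 1) / 2) * c₁ * 1 ^ d := by positivity
    exact mul_nonneg (div_nonneg h1.le h2.le) (Real.rpow_nonneg (by positivity) _)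
  · exact le_refl 0

lemma truncCauchy_measurable : Measurable (truncCauchy d c₁ 1) := by
  unfold truncCauchy
  refine Measurable.ite (measurableSet_le (by fun_prop) measurable_const) ?_ measurable_const
  have h : Continuous fun v : EuclideanSpace ℝ (Fin d) =>
      (1 + ‖v‖ ^ 2 / (1:ℝ) ^ 2) ^ (-(((d : ℝ) + 1) / 2)) := by
    apply Continuous.rpow_const (by continuity)
    intro v
    left
    positivity
  exact (continuous_const.mul h).measurable

lemma truncCauchy_comp (T : EuclideanSpace ℝ (Fin d) ≃ₗᵢ[ℝ] EuclideanSpace ℝ (Fin d))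
    (v : EuclideanSpace ℝ (Fin d)) : truncCauchy d c₁ 1 (T v) = truncCauchy d c₁ 1 v := by
  simp [truncCauchy, T.norm_map]

lemma measurePreserving_iso (T : EuclideanSpace ℝ (Fin d) ≃ₗᵢ[ℝ] EuclideanSpace ℝ (Fin d)) :
    MeasurePreserving T (truncCauchyMeasure d c₁) (truncCauchyMeasure d c₁) := by
  have hTm : Measurable T := T.continuous.measurable
  have hemb : MeasurableEmbedding T := T.toHomeomorph.measurableEmbedding
  refine ⟨hTm, ?_⟩
  unfold truncCauchyMeasure
  ext s hs
  rw [Measure.map_apply hTm hs, withDensity_apply _ (hTm hs), withDensity_apply _ hs]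
  have key := (T.measurePreserving).setLIntegral_comp_emb hemb
    (fun v => ENNReal.ofReal (truncCauchy d c₁ 1 v)) (T ⁻¹' s)
  simp only [truncCauchy_comp, Set.image_preimage_eq _ T.surjective] at key
  exact key

lemma ae_norm_le : ∀ᵐ v ∂(truncCauchyMeasure d c₁), ‖v‖ ≤ 1 := by
  rw [ae_iff]
  unfold truncCauchyMeasure
  have hs : MeasurableSet {v : EuclideanSpace ℝ (Fin d) | ¬ ‖v‖ ≤ 1} :=
    (measurableSet_le measurable_norm measurable_const).compl
  rw [withDensity_apply _ hs]
  have : ∀ᵐ v ∂(volume.restrict {v : EuclideanSpace ℝ (Fin d) | ¬ ‖v‖ ≤ 1}),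
      ENNReal.ofReal (truncCauchy d c₁ 1 v) = 0 := by
    filter_upwards [ae_restrict_mem hs] with v hv
    have hv' : ¬ ‖v‖ ≤ 1 := hv
    simp [truncCauchy, hv']
  rw [lintegral_congr_ae this]
  simp

lemma integral_density (hc₁ : 0 < c₁) (g : EuclideanSpace ℝ (Fin d) → ℝ) :
    (∫ v, truncCauchy d c₁ 1 v * g v) = ∫ v, g v ∂(truncCauchyMeasure d c₁) := by
  unfold truncCauchyMeasure
  have hf : Measurable fun v : EuclideanSpace ℝ (Fin d) => (truncCauchy d c₁ 1 v).toNNReal :=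
    truncCauchy_measurable.real_toNNReal
  rw [show (fun v : EuclideanSpace ℝ (Fin d) => ENNReal.ofReal (truncCauchy d c₁ 1 v))
      = fun v => ((truncCauchy d c₁ 1 v).toNNReal : ENNReal) from rfl]
  rw [integral_withDensity_eq_integral_smul hf g]
  congr 1
  ext v
  rw [NNReal.smul_def, smul_eq_mul, Real.coe_toNNReal _ (truncCauchy_nonneg hc₁ v)]


lemma moment_offdiag (i j : Fin d) (hij : i ≠ j) :
    (∫ v : EuclideanSpace ℝ (Fin d),
      ((d:ℝ)+1)/(1+‖v‖^2) * (v i * v j) ∂(truncCauchyMeasure d c₁)) = 0 := by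
  classical
  set F : EuclideanSpace ℝ (Fin d) → ℝ := fun v => ((d:ℝ)+1)/(1+‖v‖^2) * (v i * v j) with hF
  set T : EuclideanSpace ℝ (Fin d) ≃ₗᵢ[ℝ] EuclideanSpace ℝ (Fin d) :=
    LinearIsometryEquiv.piLpCongrRight 2
      (fun l : Fin d => if l = j then LinearIsometryEquiv.neg ℝ else
        LinearIsometryEquiv.refl ℝ ℝ) with hT
  have hTv : ∀ (v : EuclideanSpace ℝ (Fin d)) (l : Fin d),
      T v l = if l = j then -(v l) else v l := by
    intro v l
    rw [hT, LinearIsometryEquiv.piLpCongrRight_apply, PiLp.toLp_apply]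
    by_cases h : l = j
    · simp [h]
    · simp [h]
  have key := (measurePreserving_iso (c₁ := c₁) T).integral_comp
    T.toHomeomorph.measurableEmbedding F
  have hcomp : ∀ v, F (T v) = - F v := by
    intro v
    have hni : T v i = v i := by rw [hTv]; simp [hij]
    have hnj : T v j = -(v j) := by rw [hTv]; simp
    have hnorm : ‖T v‖ = ‖v‖ := T.norm_map v
    simp only [hF, hni, hnj, hnorm]
    ring
  rw [integral_congr_ae (ae_of_all _ hcomp), integral_neg] at key
  linarith

lemma moment_diag (hd : 0 < d) (i : Fin d) :
    (∫ v : EuclideanSpace ℝ (Fin d),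
      ((d:ℝ)+1)/(1+‖v‖^2) * (v i)^2 ∂(truncCauchyMeasure d c₁)) =
    ∫ v : EuclideanSpace ℝ (Fin d),
      ((d:ℝ)+1)/(1+‖v‖^2) * (v ⟨0,hd⟩)^2 ∂(truncCauchyMeasure d c₁) := by
  classical
  set i0 : Fin d := ⟨0, hd⟩
  set T : EuclideanSpace ℝ (Fin d) ≃ₗᵢ[ℝ] EuclideanSpace ℝ (Fin d) :=
    (LinearIsometryEquiv.piLpCongrLeft 2 ℝ ℝ (Equiv.swap i i0) :
      EuclideanSpace ℝ (Fin d) ≃ₗᵢ[ℝ] EuclideanSpace ℝ (Fin d)) with hT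
  have hTv : ∀ (v : EuclideanSpace ℝ (Fin d)) (l : Fin d),
      T v l = v ((Equiv.swap i i0).symm l) := by
    intro v l
    rw [hT, LinearIsometryEquiv.piLpCongrLeft_apply]
    rfl
  have key := (measurePreserving_iso (c₁ := c₁) T).integral_comp
    T.toHomeomorph.measurableEmbedding
    (fun v : EuclideanSpace ℝ (Fin d) => ((d:ℝ)+1)/(1+‖v‖^2) * (v i0)^2)
  have hcomp : ∀ v : EuclideanSpace ℝ (Fin d),
      ((d:ℝ)+1)/(1+‖T v‖^2) * ((T v) i0)^2 = ((d:ℝ)+1)/(1+‖v‖^2) * (v i)^2 := by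
    intro v
    rw [T.norm_map, hTv, Equiv.symm_swap, Equiv.swap_apply_right]
  rw [← key]
  exact integral_congr_ae (ae_of_all _ fun v => (hcomp v).symm)


lemma integrable_of_ae_bound {X : Type*} {mX : MeasurableSpace X} {μ : Measure X}
    [IsFiniteMeasure μ] {V : Type*} [NormedAddCommGroup V] {F : X → V}
    (hm : AEStronglyMeasurable F μ) {C : ℝ} (h : ∀ᵐ v ∂μ, ‖F v‖ ≤ C) : Integrable F μ :=
  Integrable.mono' (integrable_const C) hm h

lemma taylor_bound {d : ℕ} (f : EuclideanSpace ℝ (Fin d) → ℝ) {B : ℝ}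
    (hf : ContDiff ℝ 2 f) (hHess : ∀ y, ‖iteratedFDeriv ℝ 2 f y‖ ≤ B)
    (x y : EuclideanSpace ℝ (Fin d)) :
    |f y - f x - fderiv ℝ f x (y - x)| ≤ B * ‖y - x‖ ^ 2 := by
  have hB : 0 ≤ B := le_trans (norm_nonneg _) (hHess x)
  have hfd : ContDiff ℝ 1 (fderiv ℝ f) := hf.fderiv_right (by norm_num)
  have hdd : Differentiable ℝ (fderiv ℝ f) := hfd.differentiable one_ne_zero
  have hbound2 : ∀ z, ‖fderiv ℝ (fderiv ℝ f) z‖ ≤ B := by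
    intro z
    refine ContinuousLinearMap.opNorm_le_bound _ hB fun v => ?_
    refine ContinuousLinearMap.opNorm_le_bound _ (by positivity) fun w => ?_
    have h1 : fderiv ℝ (fderiv ℝ f) z v w = iteratedFDeriv ℝ 2 f z ![v, w] := by
      rw [iteratedFDeriv_two_apply]
      simp
    rw [h1]
    calc ‖iteratedFDeriv ℝ 2 f z ![v, w]‖
        ≤ ‖iteratedFDeriv ℝ 2 f z‖ * ∏ i, ‖![v,w] i‖ :=
          (iteratedFDeriv ℝ 2 f z).le_opNorm _
      _ = ‖iteratedFDeriv ℝ 2 f z‖ * (‖v‖ * ‖w‖) := by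
          rw [Fin.prod_univ_two]
          simp
      _ ≤ B * (‖v‖ * ‖w‖) := by
          have : (0:ℝ) ≤ ‖v‖ * ‖w‖ := by positivity
          exact mul_le_mul_of_nonneg_right (hHess z) this
      _ = B * ‖v‖ * ‖w‖ := by ring
  have hlip : ∀ a b : EuclideanSpace ℝ (Fin d),
      ‖fderiv ℝ f a - fderiv ℝ f b‖ ≤ B * ‖a - b‖ := fun a b =>
    Convex.norm_image_sub_le_of_norm_fderiv_le
      (fun z _ => hdd z) (fun z _ => hbound2 z) convex_univ (Set.mem_univ b) (Set.mem_univ a)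
  have hmain := Convex.norm_image_sub_le_of_norm_fderiv_le' (f := f) (φ := fderiv ℝ f x)
    (s := Metric.closedBall x ‖y - x‖) (C := B * ‖y - x‖)
    (fun z _ => (hf.differentiable (by norm_num)) z)
    (fun z hz => by
      refine le_trans (hlip z x) ?_
      have hz' : ‖z - x‖ ≤ ‖y - x‖ := by
        rw [Metric.mem_closedBall, dist_eq_norm] at hz
        exact hz
      exact mul_le_mul_of_nonneg_left hz' hB)
    (convex_closedBall _ _) (Metric.mem_closedBall_self (norm_nonneg _))
    (by rw [Metric.mem_closedBall, dist_eq_norm])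
  calc |f y - f x - fderiv ℝ f x (y - x)| = ‖f y - f x - fderiv ℝ f x (y - x)‖ := rfl
    _ ≤ B * ‖y - x‖ * ‖y - x‖ := hmain
    _ = B * ‖y - x‖ ^ 2 := by ring


lemma integral_coord {d : ℕ} {X : Type*} {mX : MeasurableSpace X} (μ : Measure X)
    (F : X → EuclideanSpace ℝ (Fin d)) (hF : Integrable F μ) (i : Fin d) :
    (∫ v, F v ∂μ) i = ∫ v, F v i ∂μ := by
  have := (EuclideanSpace.proj (𝕜 := ℝ) i).integral_comp_comm hF
  simpa using this.symm

lemma abs_coord_le {d : ℕ} (v : EuclideanSpace ℝ (Fin d)) (i : Fin d) : |v i| ≤ ‖v‖ := by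
  rw [EuclideanSpace.norm_eq, ← Real.sqrt_sq_eq_abs]
  apply Real.sqrt_le_sqrt
  have := Finset.single_le_sum (f := fun l => ‖v l‖^2) (fun l _ => sq_nonneg _)
    (Finset.mem_univ i)
  simpa [Real.norm_eq_abs, sq_abs] using this

end TCAux

set_option maxHeartbeats 1000000 in
/-- Bias characterization of the one-sided truncated-Cauchy gradient estimator
`G = ((f(x+δu) − f(x) + η)/δ)·(d+1)u/(1+‖u‖²)`: its expectation is `c₂∇f(x) + δw`
with `‖w‖ ≤ (d+1)B/2`. -/
theorem gradient_estimator_bias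
    {Ω : Type*} {mΩ : MeasurableSpace Ω} (P : Measure Ω) [IsProbabilityMeasure P]
    (d : ℕ) (hd : 0 < d) (c₁ : ℝ) (hc₁ : 0 < c₁)
    (f : EuclideanSpace ℝ (Fin d) → ℝ) (B : ℝ) (hB : 0 ≤ B)
    (hf : ContDiff ℝ 2 f)
    (hHess : ∀ y : EuclideanSpace ℝ (Fin d), ‖iteratedFDeriv ℝ 2 f y‖ ≤ B)
    (x : EuclideanSpace ℝ (Fin d)) (δ : ℝ) (hδ : 0 < δ)
    (u : Ω → EuclideanSpace ℝ (Fin d)) (hu_meas : Measurable u)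
    (hu_law : Measure.map u P = truncCauchyMeasure d c₁)
    (η : Ω → ℝ) (hη_int : Integrable η P)
    (hη_cond : P[η | MeasurableSpace.comap u inferInstance] =ᵐ[P] 0)
    (G : Ω → EuclideanSpace ℝ (Fin d))
    (hG : ∀ ω, G ω = ((f (x + δ • u ω) - f x + η ω) / δ *
        (((d : ℝ) + 1) / (1 + ‖u ω‖ ^ 2))) • u ω)
    (c₂ : ℝ)
    (hc₂ : c₂ = ∫ v : EuclideanSpace ℝ (Fin d),
      truncCauchy d c₁ 1 v * (((d : ℝ) + 1) * (v ⟨0, hd⟩) ^ 2 / (1 + ‖v‖ ^ 2))) :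
    ∃ w : EuclideanSpace ℝ (Fin d), ‖w‖ ≤ ((d : ℝ) + 1) * B / 2 ∧
      (∫ ω, G ω ∂P) = c₂ • gradient f x + δ • w := by
  classical
  set μ := truncCauchyMeasure d c₁ with hμdef
  haveI hPμ : IsProbabilityMeasure μ := hu_law ▸ Measure.isProbabilityMeasure_map hu_meas.aemeasurable
  set g₀ := gradient f x with hg₀
  have hδ' : δ ≠ 0 := ne_of_gt hδ
  have hfc : Continuous f := hf.continuous
  have hdp : (0:ℝ) < (d:ℝ) + 1 := by positivity
  have hcoordc : ∀ i : Fin d, Continuous fun v : EuclideanSpace ℝ (Fin d) => v i :=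
    fun i => (EuclideanSpace.proj (𝕜 := ℝ) i).continuous
  -- inner product and fderiv
  have hinner : ∀ v : EuclideanSpace ℝ (Fin d), (inner ℝ g₀ v : ℝ) = fderiv ℝ f x v := fun v => by
    rw [hg₀, gradient]
    exact InnerProductSpace.toDual_symm_apply
  have hgb : ∀ v : EuclideanSpace ℝ (Fin d), |(inner ℝ g₀ v : ℝ)| ≤ ‖g₀‖ * ‖v‖ := fun v =>
    abs_real_inner_le_norm _ _
  -- Taylor bound
  have htay : ∀ v : EuclideanSpace ℝ (Fin d),
      |f (x + δ • v) - f x - δ * (inner ℝ g₀ v : ℝ)| ≤ B * δ ^ 2 * ‖v‖ ^ 2 := by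
    intro v
    have h0 := TCAux.taylor_bound f hf hHess x (x + δ • v)
    rw [add_sub_cancel_left] at h0
    rw [(fderiv ℝ f x).map_smul, smul_eq_mul, ← hinner, norm_smul, Real.norm_eq_abs,
      mul_pow, sq_abs] at h0
    calc |f (x + δ • v) - f x - δ * (inner ℝ g₀ v : ℝ)| ≤ B * (δ ^ 2 * ‖v‖ ^ 2) := h0
      _ = B * δ ^ 2 * ‖v‖ ^ 2 := by ring
  -- main functions
  set kk : EuclideanSpace ℝ (Fin d) → ℝ := fun v => ((d:ℝ)+1)/(1+‖v‖^2) with hkk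
  have hkk_nonneg : ∀ v, 0 ≤ kk v := fun v => by rw [hkk]; positivity
  have hkkb : ∀ v, |kk v| ≤ (d:ℝ)+1 := by
    intro v
    rw [abs_of_nonneg (hkk_nonneg v), hkk]
    exact div_le_self hdp.le (by nlinarith [sq_nonneg ‖v‖])
  have hkkc : Continuous kk := by
    rw [hkk]
    exact continuous_const.div (by continuity) (fun v => by positivity)
  have hic : Continuous fun v : EuclideanSpace ℝ (Fin d) => (inner ℝ g₀ v : ℝ) :=
    continuous_const.inner continuous_id
  set RR : EuclideanSpace ℝ (Fin d) → ℝ :=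
    fun v => f (x + δ • v) - f x - δ * (inner ℝ g₀ v : ℝ) with hRR
  have hfxc : Continuous fun v : EuclideanSpace ℝ (Fin d) => f (x + δ • v) :=
    hfc.comp (continuous_const.add (continuous_id.const_smul δ))
  have hRRc : Continuous RR := by
    rw [hRR]; exact (hfxc.sub continuous_const).sub (continuous_const.mul hic)
  set Φ₁ : EuclideanSpace ℝ (Fin d) → EuclideanSpace ℝ (Fin d) :=
    fun v => ((inner ℝ g₀ v : ℝ) * kk v) • v with hΦ₁
  set Φ₂ : EuclideanSpace ℝ (Fin d) → EuclideanSpace ℝ (Fin d) :=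
    fun v => (RR v / δ ^ 2 * kk v) • v with hΦ₂
  set Φ : EuclideanSpace ℝ (Fin d) → EuclideanSpace ℝ (Fin d) :=
    fun v => ((f (x + δ • v) - f x) / δ * kk v) • v with hΦ
  set Ψ : EuclideanSpace ℝ (Fin d) → EuclideanSpace ℝ (Fin d) :=
    fun v => (kk v / δ) • v with hΨ
  have hΦ₁c : Continuous Φ₁ := by rw [hΦ₁]; exact (hic.mul hkkc).smul continuous_id
  have hΦ₂c : Continuous Φ₂ := by
    rw [hΦ₂]; exact ((hRRc.div_const _).mul hkkc).smul continuous_id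
  have hΦc : Continuous Φ := by
    rw [hΦ]; exact (((hfxc.sub continuous_const).div_const _).mul hkkc).smul continuous_id
  have hΨc : Continuous Ψ := by rw [hΨ]; exact (hkkc.div_const _).smul continuous_id
  -- pointwise bounds on the unit ball
  have hΦ₁b : ∀ v : EuclideanSpace ℝ (Fin d), ‖v‖ ≤ 1 → ‖Φ₁ v‖ ≤ ‖g₀‖ * ((d:ℝ)+1) := by
    intro v hv
    have h2 : |(inner ℝ g₀ v : ℝ)| ≤ ‖g₀‖ := (hgb v).trans (by nlinarith [norm_nonneg g₀])
    have h3 := hkkb v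
    simp only [hΦ₁]
    rw [norm_smul, Real.norm_eq_abs, abs_mul]
    calc |(inner ℝ g₀ v : ℝ)| * |kk v| * ‖v‖ ≤ |(inner ℝ g₀ v : ℝ)| * |kk v| :=
        mul_le_of_le_one_right (by positivity) hv
      _ ≤ ‖g₀‖ * ((d:ℝ)+1) := mul_le_mul h2 h3 (abs_nonneg _) (norm_nonneg _)
  have hΦ₂b : ∀ v : EuclideanSpace ℝ (Fin d), ‖v‖ ≤ 1 → ‖Φ₂ v‖ ≤ ((d:ℝ)+1) * B / 2 := by
    intro v hv
    have ht : (0:ℝ) ≤ ‖v‖ := norm_nonneg v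
    have hRb : |RR v / δ ^ 2| ≤ B * ‖v‖ ^ 2 := by
      rw [abs_div, abs_of_pos (by positivity : (0:ℝ) < δ ^ 2), div_le_iff₀ (by positivity)]
      calc |RR v| ≤ B * δ ^ 2 * ‖v‖ ^ 2 := htay v
        _ = B * ‖v‖ ^ 2 * δ ^ 2 := by ring
    simp only [hΦ₂]
    rw [norm_smul, Real.norm_eq_abs, abs_mul, abs_of_nonneg (hkk_nonneg v)]
    calc |RR v / δ ^ 2| * kk v * ‖v‖ ≤ (B * ‖v‖ ^ 2) * kk v * ‖v‖ :=
          mul_le_mul_of_nonneg_right (mul_le_mul_of_nonneg_right hRb (hkk_nonneg v)) ht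
      _ = (B * ((d:ℝ)+1) * ‖v‖ ^ 3) / (1 + ‖v‖ ^ 2) := by rw [hkk]; ring
      _ ≤ ((d:ℝ)+1) * B / 2 := by
          rw [div_le_iff₀ (by positivity : (0:ℝ) < 1 + ‖v‖ ^ 2)]
          nlinarith [mul_nonneg (mul_nonneg hB hdp.le)
              (mul_nonneg (sq_nonneg ‖v‖) (sub_nonneg.mpr hv)),
            mul_nonneg (mul_nonneg hB hdp.le)
              (sub_nonneg.mpr (by nlinarith : ‖v‖ ^ 2 ≤ 1))]
  have hΦb : ∀ v : EuclideanSpace ℝ (Fin d), ‖v‖ ≤ 1 →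
      ‖Φ v‖ ≤ (‖g₀‖ + B * δ) * ((d:ℝ)+1) := by
    intro v hv
    simp only [hΦ]
    rw [norm_smul, Real.norm_eq_abs, abs_mul]
    have h1 : |(f (x + δ • v) - f x) / δ| ≤ ‖g₀‖ + B * δ := by
      rw [abs_div, abs_of_pos hδ, div_le_iff₀ hδ]
      have h2 : |f (x + δ • v) - f x| ≤ |δ * (inner ℝ g₀ v : ℝ)| + |RR v| := by
        have heq : f (x + δ • v) - f x = δ * (inner ℝ g₀ v : ℝ) + RR v := by rw [hRR]; ring
        rw [heq]; exact abs_add_le _ _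
      have h3 : |δ * (inner ℝ g₀ v : ℝ)| ≤ δ * ‖g₀‖ := by
        rw [abs_mul, abs_of_pos hδ]
        have h5 : |(inner ℝ g₀ v : ℝ)| ≤ ‖g₀‖ := (hgb v).trans (by nlinarith [norm_nonneg g₀])
        nlinarith
      have h4 : |RR v| ≤ B * δ ^ 2 := by
        refine (htay v).trans ?_
        have hv2 : ‖v‖ ^ 2 ≤ 1 := by nlinarith [norm_nonneg v]
        nlinarith [mul_nonneg hB (sq_nonneg δ)]
      nlinarith
    have h3 := hkkb v
    calc |(f (x + δ • v) - f x) / δ| * |kk v| * ‖v‖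
        ≤ |(f (x + δ • v) - f x) / δ| * |kk v| :=
          mul_le_of_le_one_right (by positivity) hv
      _ ≤ (‖g₀‖ + B * δ) * ((d:ℝ)+1) :=
          mul_le_mul h1 h3 (abs_nonneg _)
            (add_nonneg (norm_nonneg _) (mul_nonneg hB hδ.le))
  have hΨb : ∀ v : EuclideanSpace ℝ (Fin d), ‖v‖ ≤ 1 → ‖Ψ v‖ ≤ ((d:ℝ)+1) / δ := by
    intro v hv
    simp only [hΨ]
    rw [norm_smul, Real.norm_eq_abs, abs_div, abs_of_pos hδ, abs_of_nonneg (hkk_nonneg v)]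
    have h3 := hkkb v
    rw [abs_of_nonneg (hkk_nonneg v)] at h3
    have h4 : kk v / δ * ‖v‖ ≤ kk v / δ :=
      mul_le_of_le_one_right (by positivity) hv
    refine h4.trans ?_
    gcongr
  -- a.e. bounds
  have haeμ : ∀ᵐ v ∂μ, ‖v‖ ≤ 1 := TCAux.ae_norm_le
  have haeP : ∀ᵐ ω ∂P, ‖u ω‖ ≤ 1 := by
    have h := TCAux.ae_norm_le (d := d) (c₁ := c₁)
    rw [← hμdef, ← hu_law] at h
    exact (ae_map_iff hu_meas.aemeasurable
      (measurableSet_le (by fun_prop) measurable_const)).mp h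
  -- integrability over μ
  have hΦ₁int : Integrable Φ₁ μ := TCAux.integrable_of_ae_bound hΦ₁c.aestronglyMeasurable
    (by filter_upwards [haeμ] with v hv using hΦ₁b v hv)
  have hΦ₂int : Integrable Φ₂ μ := TCAux.integrable_of_ae_bound hΦ₂c.aestronglyMeasurable
    (by filter_upwards [haeμ] with v hv using hΦ₂b v hv)
  have hΦint : Integrable Φ μ := TCAux.integrable_of_ae_bound hΦc.aestronglyMeasurable
    (by filter_upwards [haeμ] with v hv using hΦb v hv)
  -- split G
  have hGsplit : ∀ ω, G ω = Φ (u ω) + η ω • Ψ (u ω) := by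
    intro ω
    rw [hG ω]
    simp only [hΦ, hΨ, hkk]
    rw [smul_smul, ← add_smul]
    congr 1
    field_simp
  have hΦuint : Integrable (fun ω => Φ (u ω)) P := TCAux.integrable_of_ae_bound
    ((hΦc.stronglyMeasurable.comp_measurable hu_meas).aestronglyMeasurable)
    (by filter_upwards [haeP] with ω hω using hΦb _ hω)
  have hΨusm : AEStronglyMeasurable (fun ω => Ψ (u ω)) P :=
    (hΨc.stronglyMeasurable.comp_measurable hu_meas).aestronglyMeasurable
  have hηΨint : Integrable (fun ω => η ω • Ψ (u ω)) P :=
    hη_int.smul_of_top_left (memLp_top_of_bound hΨusm _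
      (by filter_upwards [haeP] with ω hω using hΨb _ hω))
  -- expectation of the noise part vanishes
  have hnoise : (∫ ω, η ω • Ψ (u ω) ∂P) = 0 := by
    set m := MeasurableSpace.comap u inferInstance with hm_def
    have hm : m ≤ mΩ := hu_meas.comap_le
    haveI : SigmaFinite (P.trim hm) := inferInstance
    have hu_m : Measurable[m] u := Measurable.of_comap_le le_rfl
    have hzero : ∀ i : Fin d, (∫ ω, Ψ (u ω) i * η ω ∂P) = 0 := by
      intro i
      set g : Ω → ℝ := fun ω => Ψ (u ω) i with hgdef
      have hgi_cont : Continuous fun v : EuclideanSpace ℝ (Fin d) => Ψ v i :=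
        (hcoordc i).comp hΨc
      have hg_m : StronglyMeasurable[m] g :=
        (hgi_cont.measurable.comp hu_m).stronglyMeasurable
      have hgbd : ∀ᵐ ω ∂P, ‖g ω‖ ≤ ((d:ℝ)+1) / δ := by
        filter_upwards [haeP] with ω hω
        rw [hgdef, Real.norm_eq_abs]
        exact (TCAux.abs_coord_le _ i).trans (hΨb _ hω)
      have hgη_int : Integrable (g * η) P :=
        hη_int.bdd_mul (hg_m.mono hm).aestronglyMeasurable hgbd
      have h1 : ∫ ω, (g * η) ω ∂P = ∫ ω, (P[g * η|m]) ω ∂P := (integral_condExp hm (f := g * η)).symm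
      have h2 : P[g * η|m] =ᵐ[P] g * P[η|m] := condExp_mul_of_stronglyMeasurable_left hg_m hgη_int hη_int
      have h3 : (g : Ω → ℝ) * P[η|m] =ᵐ[P] (fun _ => (0:ℝ)) := by
        filter_upwards [hη_cond] with ω hω
        simp only [Pi.mul_apply, hω]
        simp
      calc (∫ ω, Ψ (u ω) i * η ω ∂P) = ∫ ω, (g * η) ω ∂P := by rfl
        _ = ∫ ω, (P[g * η|m]) ω ∂P := h1
        _ = ∫ _ω, (0:ℝ) ∂P := integral_congr_ae (h2.trans h3)
        _ = 0 := integral_zero _ _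
    apply PiLp.ext
    intro i
    have hpt : ∀ ω, (η ω • Ψ (u ω)) i = Ψ (u ω) i * η ω := by
      intro ω
      rw [PiLp.smul_apply, smul_eq_mul]
      ring
    calc (∫ ω, η ω • Ψ (u ω) ∂P) i = ∫ ω, (η ω • Ψ (u ω)) i ∂P :=
        TCAux.integral_coord P _ hηΨint i
      _ = ∫ ω, Ψ (u ω) i * η ω ∂P := integral_congr_ae (ae_of_all _ hpt)
      _ = 0 := hzero i
      _ = (0 : EuclideanSpace ℝ (Fin d)) i := rfl
  -- change of variables
  have hcov : (∫ ω, Φ (u ω) ∂P) = ∫ v, Φ v ∂μ := by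
    rw [← hu_law]
    exact (integral_map hu_meas.aemeasurable hΦc.aestronglyMeasurable).symm
  have hGint_eq : (∫ ω, G ω ∂P) = (∫ v, Φ v ∂μ) + 0 := by
    rw [← hcov, ← hnoise, integral_congr_ae (ae_of_all _ hGsplit)]
    exact integral_add hΦuint hηΨint
  -- decompose Φ
  have hΦdec : ∀ v, Φ v = Φ₁ v + δ • Φ₂ v := by
    intro v
    simp only [hΦ, hΦ₁, hΦ₂]
    rw [smul_smul, ← add_smul]
    congr 1
    have heq : f (x + δ • v) - f x = δ * (inner ℝ g₀ v : ℝ) + RR v := by rw [hRR]; ring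
    rw [heq]
    field_simp
  have hsplitμ : (∫ v, Φ v ∂μ) = (∫ v, Φ₁ v ∂μ) + δ • (∫ v, Φ₂ v ∂μ) := by
    calc (∫ v, Φ v ∂μ) = ∫ v, (Φ₁ v + δ • Φ₂ v) ∂μ := integral_congr_ae (ae_of_all _ hΦdec)
      _ = (∫ v, Φ₁ v ∂μ) + ∫ v, δ • Φ₂ v ∂μ := integral_add hΦ₁int (hΦ₂int.smul δ)
      _ = (∫ v, Φ₁ v ∂μ) + δ • ∫ v, Φ₂ v ∂μ := by rw [integral_smul]
  -- moments
  have hc₂' : c₂ = ∫ v, kk v * (v ⟨0,hd⟩)^2 ∂μ := by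
    rw [hc₂, TCAux.integral_density hc₁, ← hμdef]
    refine integral_congr_ae (ae_of_all _ fun v => ?_)
    rw [hkk]
    ring
  have hmom0 : ∀ i j : Fin d, i ≠ j → (∫ v, kk v * (v i * v j) ∂μ) = 0 := by
    intro i j hij
    simp only [hkk, hμdef]
    exact TCAux.moment_offdiag i j hij
  have hmomd : ∀ i : Fin d, (∫ v, kk v * (v i)^2 ∂μ) = c₂ := by
    intro i
    rw [hc₂']
    simp only [hkk, hμdef]
    exact TCAux.moment_diag hd i
  have hinner_sum : ∀ v : EuclideanSpace ℝ (Fin d), (inner ℝ g₀ v : ℝ) = ∑ j, g₀ j * v j := by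
    intro v
    rw [PiLp.inner_apply]
    simp [RCLike.inner_apply, conj_trivial]
    exact Finset.sum_congr rfl fun j _ => mul_comm _ _
  have hsummand_int : ∀ (j i : Fin d), Integrable (fun v => kk v * (v j * v i)) μ := by
    intro j i
    apply TCAux.integrable_of_ae_bound
      ((hkkc.mul ((hcoordc j).mul (hcoordc i))).aestronglyMeasurable)
      (C := ((d:ℝ)+1))
    filter_upwards [haeμ] with v hv
    rw [Real.norm_eq_abs, Pi.mul_apply, Pi.mul_apply, abs_mul, abs_mul]
    have h1 := hkkb v
    have h2 := (TCAux.abs_coord_le v j).trans hv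
    have h3 := (TCAux.abs_coord_le v i).trans hv
    calc |kk v| * (|v j| * |v i|) ≤ |kk v| * (|v j| * 1) := by
          refine mul_le_mul_of_nonneg_left ?_ (abs_nonneg _)
          exact mul_le_mul_of_nonneg_left h3 (abs_nonneg _)
      _ = |kk v| * |v j| := by ring
      _ ≤ |kk v| := mul_le_of_le_one_right (abs_nonneg _) h2
      _ ≤ (d:ℝ)+1 := h1
  have hΦ₁val : (∫ v, Φ₁ v ∂μ) = c₂ • g₀ := by
    apply PiLp.ext
    intro i
    rw [TCAux.integral_coord μ Φ₁ hΦ₁int i, PiLp.smul_apply, smul_eq_mul]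
    have hpt : ∀ v : EuclideanSpace ℝ (Fin d), Φ₁ v i = ∑ j, g₀ j * (kk v * (v j * v i)) := by
      intro v
      simp only [hΦ₁]
      rw [PiLp.smul_apply, smul_eq_mul, hinner_sum v, Finset.sum_mul, Finset.sum_mul]
      refine Finset.sum_congr rfl fun j _ => by ring
    rw [integral_congr_ae (ae_of_all _ hpt),
      integral_finset_sum _ (fun j _ => (hsummand_int j i).const_mul (g₀ j))]
    have hterm : ∀ j : Fin d, (∫ v, g₀ j * (kk v * (v j * v i)) ∂μ)
        = g₀ j * ∫ v, kk v * (v j * v i) ∂μ := fun j => integral_const_mul _ _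
    rw [Finset.sum_congr rfl fun j _ => hterm j]
    rw [Finset.sum_eq_single i]
    · have hsq : (∫ v, kk v * (v i * v i) ∂μ) = c₂ := by
        rw [← hmomd i]
        exact integral_congr_ae (ae_of_all _ fun v => by
          show kk v * (v i * v i) = kk v * (v i) ^ 2
          ring)
      rw [hsq]
      ring
    · intro j _ hji
      rw [hmom0 j i hji, mul_zero]
    · intro h
      exact absurd (Finset.mem_univ i) h
  -- conclusion
  refine ⟨∫ v, Φ₂ v ∂μ, ?_, ?_⟩
  · refine le_trans (norm_integral_le_of_norm_le (integrable_const (((d:ℝ)+1) * B / 2))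
      (by filter_upwards [haeμ] with v hv using hΦ₂b v hv)) ?_
    simp
  · rw [hGint_eq, add_zero, hsplitμ, hΦ₁val]
end

section
/- Let f : ℝ^d → ℝ be continuously differentiable with L-Lipschitz gradient and bounded below, and let x : [0,∞) → ℝ^d be a solution of the gradient flow ẋ(t) = −∇f(x(t)) whose trajectory {x(t) : t ≥ 0} is bounded. Then t ↦ f(x(t)) is nonincreasing with (d/dt) f(x(t)) = −‖∇f(x(t))‖² for all t, ∇f(x(t)) → 0 as t → ∞, and the distance from x(t) to the set H = {x ∈ ℝ^d : ∇f(x) = 0} tends to 0 as t → ∞. -/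
open MeasureTheory Real Filter Topology

/-- Gradient flow facts: along a bounded solution of `ẋ = −∇f(x)` with `f` `C¹`,
bounded below, and with Lipschitz gradient, `f(x(t))` is nonincreasing with derivative
`−‖∇f(x(t))‖²`, `∇f(x(t)) → 0`, and the distance of `x(t)` to the set of stationary
points tends to `0`. -/
theorem gradient_flow_convergence
    {d : ℕ} (f : EuclideanSpace ℝ (Fin d) → ℝ) (L fstar : ℝ)
    (hf : ContDiff ℝ 1 f)
    (hlip : ∀ a b : EuclideanSpace ℝ (Fin d), ‖gradient f a - gradient f b‖ ≤ L * ‖a - b‖)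
    (hbelow : ∀ y, fstar ≤ f y)
    (x : ℝ → EuclideanSpace ℝ (Fin d))
    (hode : ∀ t : ℝ, 0 ≤ t → HasDerivAt x (-gradient f (x t)) t)
    (htraj : ∃ C : ℝ, ∀ t : ℝ, 0 ≤ t → ‖x t‖ ≤ C) :
    AntitoneOn (fun t => f (x t)) (Set.Ici 0) ∧
    (∀ t : ℝ, 0 ≤ t → HasDerivAt (fun s => f (x s)) (-‖gradient f (x t)‖ ^ 2) t) ∧
    Tendsto (fun t => gradient f (x t)) atTop (𝓝 0) ∧
    Tendsto (fun t => Metric.infDist (x t) {y | gradient f y = 0}) atTop (𝓝 0) := by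
  obtain ⟨C, hC⟩ := htraj
  have hdiff : Differentiable ℝ f := hf.differentiable one_ne_zero
  -- the derivative formula
  have hderiv : ∀ t : ℝ, 0 ≤ t →
      HasDerivAt (fun s => f (x s)) (-‖gradient f (x t)‖ ^ 2) t := by
    intro t ht
    have h1 : HasGradientAt f (gradient f (x t)) (x t) := (hdiff (x t)).hasGradientAt
    have h2 := h1.hasFDerivAt.comp_hasDerivAt t (hode t ht)
    have h3 : (inner ℝ (gradient f (x t)) (-gradient f (x t)) : ℝ)
        = -‖gradient f (x t)‖ ^ 2 := by
      rw [inner_neg_right, real_inner_self_eq_norm_sq]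
    exact h2.congr_deriv (by rw [InnerProductSpace.toDual_apply_apply, h3])
  -- antitone
  have hanti : AntitoneOn (fun t => f (x t)) (Set.Ici 0) := by
    apply antitoneOn_of_deriv_nonpos (convex_Ici 0)
    · exact fun t ht => (hderiv t ht).continuousAt.continuousWithinAt
    · intro t ht
      rw [interior_Ici] at ht
      exact (hderiv t ht.le).differentiableAt.differentiableWithinAt
    · intro t ht
      rw [interior_Ici] at ht
      rw [(hderiv t ht.le).deriv]
      exact neg_nonpos.2 (sq_nonneg _)
  -- constants
  set L' : ℝ := max L 0 with hL'def
  have hL'0 : 0 ≤ L' := le_max_right _ _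
  have hlip' : ∀ a b : EuclideanSpace ℝ (Fin d),
      ‖gradient f a - gradient f b‖ ≤ L' * ‖a - b‖ := fun a b =>
    le_trans (hlip a b) (mul_le_mul_of_nonneg_right (le_max_left _ _) (norm_nonneg _))
  have hC0 : 0 ≤ C := le_trans (norm_nonneg _) (hC 0 le_rfl)
  set M : ℝ := L' * C + ‖gradient f 0‖ with hMdef
  have hM0 : 0 ≤ M := add_nonneg (mul_nonneg hL'0 hC0) (norm_nonneg _)
  have hMbd : ∀ t : ℝ, 0 ≤ t → ‖gradient f (x t)‖ ≤ M := by
    intro t ht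
    have h1 : ‖gradient f (x t) - gradient f 0‖ ≤ L' * ‖x t - 0‖ := hlip' _ _
    rw [sub_zero] at h1
    have h2 := norm_sub_norm_le (gradient f (x t)) (gradient f 0)
    have h3 : L' * ‖x t‖ ≤ L' * C := mul_le_mul_of_nonneg_left (hC t ht) hL'0
    simp only [hMdef]
    linarith
  -- x is Lipschitz on [0,∞)
  have hxlip : ∀ s ∈ Set.Ici (0:ℝ), ∀ t ∈ Set.Ici (0:ℝ), ‖x s - x t‖ ≤ M * |s - t| := by
    intro s hs t ht
    have := Convex.norm_image_sub_le_of_norm_hasDerivWithin_le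
      (f := x) (f' := fun r => -gradient f (x r)) (s := Set.Ici (0:ℝ)) (C := M)
      (fun r hr => (hode r hr).hasDerivWithinAt)
      (fun r hr => by rw [norm_neg]; exact hMbd r hr) (convex_Ici 0) ht hs
    simpa [Real.norm_eq_abs] using this
  set q : ℝ → ℝ := fun t => ‖gradient f (x t)‖ ^ 2 with hqdef
  have hq0 : ∀ t, 0 ≤ q t := fun t => sq_nonneg _
  set K : ℝ := 2 * M * (L' * M) with hKdef
  -- q is K-Lipschitz on [0,∞)
  have hqlip : ∀ s t : ℝ, 0 ≤ s → 0 ≤ t → |q s - q t| ≤ K * |s - t| := by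
    intro s t hs ht
    set a := gradient f (x s)
    set b := gradient f (x t)
    have h1 : |‖a‖ - ‖b‖| ≤ ‖a - b‖ := abs_norm_sub_norm_le _ _
    have h2 : ‖a - b‖ ≤ L' * (M * |s - t|) := by
      calc ‖a - b‖ ≤ L' * ‖x s - x t‖ := hlip' _ _
        _ ≤ L' * (M * |s - t|) := mul_le_mul_of_nonneg_left (hxlip s hs t ht) hL'0
    have h3 : ‖a‖ + ‖b‖ ≤ 2 * M := by
      have := hMbd s hs; have := hMbd t ht; linarith
    have heq : q s - q t = (‖a‖ - ‖b‖) * (‖a‖ + ‖b‖) := by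
      simp only [hqdef]; ring
    rw [heq, abs_mul, abs_of_nonneg (add_nonneg (norm_nonneg _) (norm_nonneg _))]
    calc |‖a‖ - ‖b‖| * (‖a‖ + ‖b‖) ≤ (L' * (M * |s - t|)) * (2 * M) := by
          apply mul_le_mul (le_trans h1 h2) h3
            (add_nonneg (norm_nonneg _) (norm_nonneg _))
            (mul_nonneg hL'0 (mul_nonneg hM0 (abs_nonneg _)))
      _ = K * |s - t| := by rw [hKdef]; ring
  -- Barbalat: q → 0
  have key : Tendsto q atTop (𝓝 0) := by
    rw [Metric.tendsto_atTop]
    intro ε hε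
    by_contra hcon
    push_neg at hcon
    have hsel : ∀ N : ℝ, ∃ t, N ≤ t ∧ 0 ≤ t ∧ ε ≤ q t := by
      intro N
      obtain ⟨t, ht, hqt⟩ := hcon (max N 0)
      refine ⟨t, le_trans (le_max_left _ _) ht, le_trans (le_max_right _ _) ht, ?_⟩
      rwa [Real.dist_0_eq_abs, abs_of_nonneg (hq0 t)] at hqt
    set K' : ℝ := max K 1 with hK'def
    have hK'pos : 0 < K' := lt_of_lt_of_le one_pos (le_max_right _ _)
    set δ : ℝ := ε / (2 * K') with hδdef
    have hδpos : 0 < δ := div_pos hε (by linarith)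
    -- drop lemma
    have drop : ∀ t : ℝ, 0 ≤ t → ε ≤ q t →
        f (x (t + δ)) ≤ f (x t) - δ * (ε / 2) := by
      intro t ht hεt
      have hs2 : ∀ s ∈ Set.Icc t (t + δ), ε / 2 ≤ q s := by
        intro s hs
        have hs0 : 0 ≤ s := le_trans ht hs.1
        have h1 := (abs_le.mp (hqlip s t hs0 ht)).1
        have h2 : |s - t| ≤ δ := by
          rw [abs_of_nonneg (by linarith [hs.1])]; linarith [hs.2]
        have h3 : K * |s - t| ≤ K' * δ :=
          mul_le_mul (le_max_left _ _) h2 (abs_nonneg _) hK'pos.le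
        have h4 : K' * δ = ε / 2 := by
          rw [hδdef]; field_simp
        linarith
      set φ : ℝ → ℝ := fun s => f (x s) + (ε / 2) * s with hφdef
      have hφanti : AntitoneOn φ (Set.Icc t (t + δ)) := by
        apply antitoneOn_of_deriv_nonpos (convex_Icc _ _)
        · intro s hs
          have hs0 : 0 ≤ s := le_trans ht hs.1
          exact (((hderiv s hs0).add (by
            simpa using (hasDerivAt_id s).const_mul (ε/2))).continuousAt).continuousWithinAt
        · intro s hs
          rw [interior_Icc] at hs
          have hs0 : 0 ≤ s := le_trans ht hs.1.le
          exact (((hderiv s hs0).add (by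
            simpa using (hasDerivAt_id s).const_mul (ε/2))).differentiableAt).differentiableWithinAt
        · intro s hs
          rw [interior_Icc] at hs
          have hs0 : 0 ≤ s := le_trans ht hs.1.le
          have hd : HasDerivAt φ (-‖gradient f (x s)‖ ^ 2 + ε / 2) s :=
            (hderiv s hs0).add (by simpa using (hasDerivAt_id s).const_mul (ε/2))
          rw [hd.deriv]
          have := hs2 s ⟨hs.1.le, hs.2.le⟩
          simp only [hqdef] at this
          linarith
      have := hφanti (Set.left_mem_Icc.2 (by linarith)) (Set.right_mem_Icc.2 (by linarith))
        (by linarith)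
      simp only [hφdef] at this
      linarith
    -- recursive sequence
    choose T hT1 hT2 hT3 using hsel
    set u : ℕ → ℝ := fun n => Nat.rec (T 0) (fun _ p => T (p + δ)) n with hudef
    have hu0 : ∀ n, 0 ≤ u n := by
      intro n; cases n with
      | zero => exact hT2 0
      | succ m => exact hT2 _
    have huq : ∀ n, ε ≤ q (u n) := by
      intro n; cases n with
      | zero => exact hT3 0
      | succ m => exact hT3 _
    have hustep : ∀ n, u n + δ ≤ u (n + 1) := fun n => hT1 _
    have hdec : ∀ n : ℕ, f (x (u n)) ≤ f (x (u 0)) - n * (δ * (ε / 2)) := by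
      intro n
      induction n with
      | zero => simp
      | succ m ih =>
        have h1 : f (x (u m + δ)) ≤ f (x (u m)) - δ * (ε / 2) :=
          drop (u m) (hu0 m) (huq m)
        have h2 : f (x (u (m + 1))) ≤ f (x (u m + δ)) :=
          hanti (Set.mem_Ici.2 (by linarith [hu0 m, hδpos.le]))
            (Set.mem_Ici.2 (hu0 (m + 1))) (hustep m)
        push_cast
        push_cast at ih
        linarith
    obtain ⟨n, hn⟩ := exists_nat_gt ((f (x (u 0)) - fstar) / (δ * (ε / 2)))
    have hpos : 0 < δ * (ε / 2) := mul_pos hδpos (by linarith)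
    have h5 : f (x (u 0)) - fstar < n * (δ * (ε / 2)) := by
      rw [div_lt_iff₀ hpos] at hn; linarith
    have := hbelow (x (u n))
    have := hdec n
    linarith
  -- gradient tends to 0
  have hgrad0 : Tendsto (fun t => gradient f (x t)) atTop (𝓝 0) := by
    rw [tendsto_zero_iff_norm_tendsto_zero]
    have heq : (fun t => ‖gradient f (x t)‖) = fun t => Real.sqrt (q t) := by
      funext t; rw [hqdef, Real.sqrt_sq (norm_nonneg _)]
    rw [heq]
    have := (Real.continuous_sqrt.tendsto 0).comp key
    simpa [Function.comp_def] using this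
  refine ⟨hanti, hderiv, hgrad0, ?_⟩
  -- distance to stationary points
  set H : Set (EuclideanSpace ℝ (Fin d)) := {y | gradient f y = 0} with hHdef
  have hgc : Continuous (gradient f) := by
    have : LipschitzWith (Real.toNNReal L') (gradient f) := by
      apply LipschitzWith.of_dist_le_mul
      intro a b
      rw [dist_eq_norm, dist_eq_norm, Real.coe_toNNReal _ hL'0]
      exact hlip' a b
    exact this.continuous
  have keylem : ∀ ε : ℝ, 0 < ε → ∃ δ2 : ℝ, 0 < δ2 ∧
      ∀ y : EuclideanSpace ℝ (Fin d), ‖y‖ ≤ C → ‖gradient f y‖ < δ2 →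
        Metric.infDist y H < ε := by
    intro ε hε
    by_cases hA : ∃ y ∈ Metric.closedBall (0 : EuclideanSpace ℝ (Fin d)) C,
        ε ≤ Metric.infDist y H
    · set A := Metric.closedBall (0 : EuclideanSpace ℝ (Fin d)) C ∩
        {y | ε ≤ Metric.infDist y H} with hAdef
      have hAc : IsCompact A := (isCompact_closedBall _ _).inter_right
        (isClosed_le continuous_const (Metric.continuous_infDist_pt H))
      have hAne : A.Nonempty := by
        obtain ⟨y, hy1, hy2⟩ := hA; exact ⟨y, hy1, hy2⟩
      obtain ⟨y0, hy0A, hy0min⟩ := hAc.exists_isMinOn hAne (hgc.norm.continuousOn)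
      have hδ : 0 < ‖gradient f y0‖ := by
        rcases (norm_nonneg (gradient f y0)).lt_or_eq with h | h
        · exact h
        · exfalso
          have hz : gradient f y0 = 0 := by
            rw [← norm_eq_zero]; exact h.symm
          have : Metric.infDist y0 H = 0 := Metric.infDist_zero_of_mem hz
          have := hy0A.2
          simp only [Set.mem_setOf_eq] at this
          linarith
      refine ⟨‖gradient f y0‖, hδ, fun y hy hlt => ?_⟩
      by_contra hge
      push_neg at hge
      have hyA : y ∈ A := ⟨mem_closedBall_zero_iff.2 hy, hge⟩
      exact absurd (hy0min hyA) (not_le.2 hlt)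
    · push_neg at hA
      exact ⟨1, one_pos, fun y hy _ => hA y (mem_closedBall_zero_iff.2 hy)⟩
  rw [Metric.tendsto_atTop]
  intro ε hε
  obtain ⟨δ2, hδ2, hkey⟩ := keylem ε hε
  have h1 : ∀ᶠ t in atTop, ‖gradient f (x t)‖ < δ2 :=
    (tendsto_zero_iff_norm_tendsto_zero.mp hgrad0).eventually_lt_const hδ2
  have h2 : ∀ᶠ t : ℝ in atTop, 0 ≤ t := eventually_ge_atTop 0
  obtain ⟨N, hN⟩ := eventually_atTop.mp (h1.and h2)
  refine ⟨N, fun t ht => ?_⟩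
  obtain ⟨hN1, hN2⟩ := hN t ht
  have := hkey (x t) (hC t hN2) hN1
  rw [Real.dist_0_eq_abs, abs_of_nonneg Metric.infDist_nonneg]
  exact this
end

section
/- Let d ≥ 1 and let f : ℝ^d → ℝ be differentiable with L-Lipschitz gradient satisfying ‖∇f(x)‖ ≤ B for all x. For δ > 0 define the δ-difference smoothed function f_δ(x) = E_u[f(x + δu) − f(x)], where u is distributed with the unit-scale truncated Cauchy density h. Then for every x ∈ ℝ^d, |f_δ(x)| ≤ (c₁₁/(d+1))·(Lδ²/2 + 2δB), where c₁₁ = 2Γ((d+1)/2)/(√π·Γ(d/2)·c₁). -/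
open MeasureTheory Real Filter Topology ProbabilityTheory

/-- Bound on the δ-difference smoothed function:
`|f_δ(x)| = |E_u[f(x+δu) − f(x)]| ≤ (c₁₁/(d+1))(Lδ²/2 + 2δB)`. -/
theorem delta_difference_smoothed_bound
    (d : ℕ) (hd : 0 < d) (c₁ : ℝ) (hc₁ : 0 < c₁)
    (hnorm : ∫ u : EuclideanSpace ℝ (Fin d), truncCauchy d c₁ 1 u = 1)
    (f : EuclideanSpace ℝ (Fin d) → ℝ) (L B : ℝ)
    (hf : Differentiable ℝ f)
    (hlip : ∀ a b : EuclideanSpace ℝ (Fin d), ‖gradient f a - gradient f b‖ ≤ L * ‖a - b‖)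
    (hgB : ∀ y, ‖gradient f y‖ ≤ B)
    (c₁₁ : ℝ)
    (hc₁₁ : c₁₁ = 2 * Real.Gamma (((d : ℝ) + 1) / 2) /
      (Real.sqrt Real.pi * Real.Gamma ((d : ℝ) / 2) * c₁))
    (δ : ℝ) (hδ : 0 < δ) (x : EuclideanSpace ℝ (Fin d)) :
    |∫ u : EuclideanSpace ℝ (Fin d), truncCauchy d c₁ 1 u * (f (x + δ • u) - f x)|
      ≤ (c₁₁ / ((d : ℝ) + 1)) * (L * δ ^ 2 / 2 + 2 * δ * B) := by
  have hd1 : (1 : ℝ) ≤ (d : ℝ) := by exact_mod_cast hd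
  haveI : Nonempty (Fin d) := ⟨⟨0, hd⟩⟩
  have hB : 0 ≤ B := le_trans (norm_nonneg _) (hgB x)
  have hL : 0 ≤ L := by
    have hv : ‖(EuclideanSpace.single (⟨0, hd⟩ : Fin d) (1 : ℝ))‖ = 1 := by
      simp [EuclideanSpace.norm_single]
    have h := hlip (EuclideanSpace.single (⟨0, hd⟩ : Fin d) (1 : ℝ)) 0
    rw [sub_zero, hv, mul_one] at h
    exact le_trans (norm_nonneg _) h
  have hΓ1 : 0 < Real.Gamma (((d : ℝ) + 1) / 2) := Real.Gamma_pos_of_pos (by positivity)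
  have hΓd : 0 < Real.Gamma ((d : ℝ) / 2) := Real.Gamma_pos_of_pos (by positivity)
  have hπ : (0 : ℝ) < Real.pi ^ (((d : ℝ) + 1) / 2) := Real.rpow_pos_of_pos Real.pi_pos _
  set K : ℝ := Real.Gamma (((d : ℝ) + 1) / 2) / (Real.pi ^ (((d : ℝ) + 1) / 2) * c₁ * 1 ^ d)
    with hKdef
  have hK : 0 < K := by
    rw [hKdef]; positivity
  -- nonnegativity of the density
  have htc_nonneg : ∀ u : EuclideanSpace ℝ (Fin d), 0 ≤ truncCauchy d c₁ 1 u := by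
    intro u
    unfold truncCauchy
    split
    · positivity
    · exact le_refl 0
  -- pointwise bound by indicator of the unit ball
  have htc_le : ∀ u : EuclideanSpace ℝ (Fin d), truncCauchy d c₁ 1 u ≤
      Set.indicator (Metric.closedBall (0 : EuclideanSpace ℝ (Fin d)) 1) (fun _ => K) u := by
    intro u
    unfold truncCauchy
    by_cases h : ‖u‖ ≤ 1
    · rw [if_pos h, Set.indicator_of_mem (by simpa [Metric.mem_closedBall, dist_zero_right] using h)]
      have h1 : (1 + ‖u‖ ^ 2 / 1 ^ 2) ^ (-(((d : ℝ) + 1) / 2)) ≤ 1 := by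
        apply Real.rpow_le_one_of_one_le_of_nonpos
        · nlinarith [sq_nonneg ‖u‖]
        · have : (0:ℝ) ≤ ((d : ℝ) + 1) / 2 := by positivity
          linarith
      calc K * (1 + ‖u‖ ^ 2 / 1 ^ 2) ^ (-(((d : ℝ) + 1) / 2)) ≤ K * 1 :=
            mul_le_mul_of_nonneg_left h1 hK.le
        _ = K := mul_one K
    · rw [if_neg h]
      exact Set.indicator_nonneg (fun _ _ => hK.le) u
  -- measurability
  have htc_meas : Measurable (truncCauchy d c₁ 1) := by
    unfold truncCauchy
    have h1 : Measurable fun u : EuclideanSpace ℝ (Fin d) =>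
        Real.Gamma (((d : ℝ) + 1) / 2) / (Real.pi ^ (((d : ℝ) + 1) / 2) * c₁ * (1:ℝ) ^ d) *
          (1 + ‖u‖ ^ 2 / (1:ℝ) ^ 2) ^ (-(((d : ℝ) + 1) / 2)) := by
      fun_prop
    exact Measurable.ite (measurableSet_le measurable_norm measurable_const) h1 measurable_const
  -- integrability of the density
  have hIntTc : Integrable (truncCauchy d c₁ 1) := by
    by_contra h
    rw [integral_undef h] at hnorm
    norm_num at hnorm
  -- the key normalization inequality : 1 ≤ K * vol(closedBall 0 1)
  have hIndInt : Integrable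
      (Set.indicator (Metric.closedBall (0 : EuclideanSpace ℝ (Fin d)) 1) (fun _ => K)) := by
    rw [integrable_indicator_iff measurableSet_closedBall]
    exact (integrableOn_const_iff (C := K)).mpr (Or.inr measure_closedBall_lt_top)
  have h1KV : 1 ≤ K * (volume (Metric.closedBall (0 : EuclideanSpace ℝ (Fin d)) 1)).toReal := by
    have hle := integral_mono hIntTc hIndInt htc_le
    rw [hnorm, integral_indicator measurableSet_closedBall, setIntegral_const, smul_eq_mul,
      mul_comm] at hle
    exact hle
  -- compute the volume
  have hVol : (volume (Metric.closedBall (0 : EuclideanSpace ℝ (Fin d)) 1)).toReal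
      = Real.sqrt Real.pi ^ d / Real.Gamma ((d : ℝ) / 2 + 1) := by
    rw [EuclideanSpace.volume_closedBall]
    have hnn : (0:ℝ) ≤ Real.sqrt Real.pi ^ Fintype.card (Fin d) /
        Real.Gamma ((Fintype.card (Fin d) : ℝ) / 2 + 1) := by
      have : (0:ℝ) < Real.Gamma ((Fintype.card (Fin d) : ℝ) / 2 + 1) :=
        Real.Gamma_pos_of_pos (by positivity)
      positivity
    rw [ENNReal.toReal_mul, ENNReal.toReal_pow, ENNReal.toReal_ofReal (by norm_num),
      ENNReal.toReal_ofReal hnn]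
    simp [Fintype.card_fin]
  -- rewrite π^((d+1)/2) as √π^(d+1)
  have hPow : Real.pi ^ (((d : ℝ) + 1) / 2) = Real.sqrt Real.pi ^ (d + 1) := by
    rw [Real.sqrt_eq_rpow, ← Real.rpow_natCast (Real.pi ^ (1/2 : ℝ)) (d + 1),
      ← Real.rpow_mul Real.pi_pos.le]
    congr 1
    push_cast
    ring
  have hΓrec : Real.Gamma ((d : ℝ) / 2 + 1) = ((d : ℝ) / 2) * Real.Gamma ((d : ℝ) / 2) :=
    Real.Gamma_add_one (by positivity)
  have hsπ : 0 < Real.sqrt Real.pi := Real.sqrt_pos.mpr Real.pi_pos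
  -- derive : √π * c₁ * (d/2) * Γ(d/2) ≤ Γ((d+1)/2)
  have hkey : Real.sqrt Real.pi * c₁ * ((d : ℝ) / 2) * Real.Gamma ((d : ℝ) / 2)
      ≤ Real.Gamma (((d : ℝ) + 1) / 2) := by
    rw [hVol, hKdef, hPow, hΓrec, one_pow, mul_one, div_mul_div_comm] at h1KV
    have hQ : (0:ℝ) < ((d : ℝ) / 2) * Real.Gamma ((d : ℝ) / 2) := by positivity
    have hsd : (0:ℝ) < Real.sqrt Real.pi ^ d := pow_pos hsπ d
    have h1' := (one_le_div (by positivity)).mp h1KV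
    have h2 : Real.sqrt Real.pi * c₁ * ((d : ℝ) / 2) * Real.Gamma ((d : ℝ) / 2) *
        Real.sqrt Real.pi ^ d ≤ Real.Gamma (((d : ℝ) + 1) / 2) * Real.sqrt Real.pi ^ d := by
      rw [pow_succ] at h1'
      nlinarith [h1']
    exact le_of_mul_le_mul_right h2 hsd
  -- hence c₁₁ ≥ d
  have hc11 : (d : ℝ) ≤ c₁₁ := by
    rw [hc₁₁, le_div_iff₀ (by positivity)]
    nlinarith [hkey]
  -- mean value bound : |f y - f z| ≤ B ‖y - z‖
  have hmvt : ∀ y z : EuclideanSpace ℝ (Fin d), |f y - f z| ≤ B * ‖y - z‖ := by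
    intro y z
    have hbound : ∀ w : EuclideanSpace ℝ (Fin d), w ∈ Set.univ → ‖fderiv ℝ f w‖ ≤ B := by
      intro w _
      have : ‖fderiv ℝ f w‖ = ‖gradient f w‖ := by
        unfold gradient
        rw [LinearIsometryEquiv.norm_map]
      rw [this]
      exact hgB w
    have := Convex.norm_image_sub_le_of_norm_fderiv_le (fun w _ => hf w) hbound convex_univ
      (Set.mem_univ z) (Set.mem_univ y)
    simpa [Real.norm_eq_abs] using this
  -- pointwise bound on the integrand
  have hptw : ∀ u : EuclideanSpace ℝ (Fin d),
      |truncCauchy d c₁ 1 u * (f (x + δ • u) - f x)| ≤ truncCauchy d c₁ 1 u * (B * δ) := by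
    intro u
    rw [abs_mul, abs_of_nonneg (htc_nonneg u)]
    by_cases h : ‖u‖ ≤ 1
    · apply mul_le_mul_of_nonneg_left _ (htc_nonneg u)
      calc |f (x + δ • u) - f x| ≤ B * ‖x + δ • u - x‖ := hmvt _ _
        _ = B * (δ * ‖u‖) := by rw [add_sub_cancel_left, norm_smul, Real.norm_eq_abs,
              abs_of_pos hδ]
        _ ≤ B * (δ * 1) := by
            apply mul_le_mul_of_nonneg_left _ hB
            exact mul_le_mul_of_nonneg_left h hδ.le
        _ = B * δ := by ring
    · have : truncCauchy d c₁ 1 u = 0 := by unfold truncCauchy; rw [if_neg h]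
      rw [this]; simp
  -- integrability of the integrand
  have hg_meas : AEStronglyMeasurable
      (fun u : EuclideanSpace ℝ (Fin d) => truncCauchy d c₁ 1 u * (f (x + δ • u) - f x)) volume := by
    apply AEStronglyMeasurable.mul htc_meas.aestronglyMeasurable
    apply Continuous.aestronglyMeasurable
    exact (hf.continuous.comp (continuous_const.add (continuous_id.const_smul δ))).sub
      continuous_const
  have hIntg : Integrable
      (fun u : EuclideanSpace ℝ (Fin d) => truncCauchy d c₁ 1 u * (f (x + δ • u) - f x)) := by
    apply Integrable.mono' (hIntTc.mul_const (B * δ)) hg_meas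
    filter_upwards with u
    have h := hptw u
    rw [abs_mul] at h
    simpa [Real.norm_eq_abs] using h
  -- final chain
  have hmain : |∫ u : EuclideanSpace ℝ (Fin d), truncCauchy d c₁ 1 u * (f (x + δ • u) - f x)|
      ≤ B * δ := by
    calc |∫ u : EuclideanSpace ℝ (Fin d), truncCauchy d c₁ 1 u * (f (x + δ • u) - f x)|
        ≤ ∫ u : EuclideanSpace ℝ (Fin d), |truncCauchy d c₁ 1 u * (f (x + δ • u) - f x)| :=
          (Real.norm_eq_abs _ ▸ norm_integral_le_integral_norm _).trans_eq
            (by simp [Real.norm_eq_abs, abs_mul])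
      _ ≤ ∫ u : EuclideanSpace ℝ (Fin d), truncCauchy d c₁ 1 u * (B * δ) :=
          integral_mono hIntg.abs (hIntTc.mul_const _) hptw
      _ = (∫ u : EuclideanSpace ℝ (Fin d), truncCauchy d c₁ 1 u) * (B * δ) :=
          integral_mul_const _ _
      _ = B * δ := by rw [hnorm, one_mul]
  refine hmain.trans ?_
  rw [div_mul_eq_mul_div, le_div_iff₀ (by positivity)]
  nlinarith [mul_nonneg (mul_nonneg hB hδ.le) (sub_nonneg.mpr hd1),
    mul_nonneg hL (sq_nonneg δ), mul_nonneg (mul_nonneg hB hδ.le) (sub_nonneg.mpr hc11)]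
end

section
/- Let d ≥ 1 and let f : ℝ^d → ℝ be differentiable with L-Lipschitz gradient. For δ > 0 define the one-sided smoothed gradient ∇f_δ(x) = (1/δ)·E_u[(f(x + δu) − f(x))·(d+1)u/(1+‖u‖²)], where u is distributed with the unit-scale truncated Cauchy density h. Let c₁₂ := d/c₂², the squared Frobenius norm of the inverse of the matrix A = E_u[(d+1)uuᵀ/(1+‖u‖²)] = c₂I_d. Then for every x ∈ ℝ^d, ‖∇f(x)‖² ≤ 2c₁₂·‖∇f_δ(x)‖² + c₁₁·c₁₂·δ²·L²·(d+1). -/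
open MeasureTheory Real Filter Topology ProbabilityTheory

open scoped RealInnerProductSpace ENNReal

section Aux
variable {d : ℕ} {c₁ : ℝ}

/-- the constant in front -/
noncomputable def tcK (d : ℕ) (c₁ : ℝ) : ℝ :=
  Real.Gamma (((d : ℝ) + 1) / 2) / (Real.pi ^ (((d : ℝ) + 1) / 2) * c₁)

lemma tcK_pos (hc₁ : 0 < c₁) : 0 < tcK d c₁ := by
  apply div_pos (Real.Gamma_pos_of_pos (by positivity))
  exact mul_pos (Real.rpow_pos_of_pos Real.pi_pos _) hc₁

lemma tc_eq (u : EuclideanSpace ℝ (Fin d)) :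
    truncCauchy d c₁ 1 u =
      if ‖u‖ ≤ 1 then tcK d c₁ * (1 + ‖u‖ ^ 2) ^ (-(((d : ℝ) + 1) / 2)) else 0 := by
  simp [truncCauchy, tcK]

lemma tc_nonneg (hc₁ : 0 < c₁) (u : EuclideanSpace ℝ (Fin d)) :
    0 ≤ truncCauchy d c₁ 1 u := by
  rw [tc_eq]
  split
  · exact mul_nonneg (tcK_pos hc₁).le (Real.rpow_nonneg (by positivity) _)
  · exact le_refl 0

lemma tc_le (hc₁ : 0 < c₁) (u : EuclideanSpace ℝ (Fin d)) :
    truncCauchy d c₁ 1 u ≤ tcK d c₁ := by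
  rw [tc_eq]
  split
  · calc tcK d c₁ * (1 + ‖u‖ ^ 2) ^ (-(((d : ℝ) + 1) / 2))
        ≤ tcK d c₁ * 1 := by
          gcongr
          · exact (tcK_pos hc₁).le
          · exact Real.rpow_le_one_of_one_le_of_nonpos (by nlinarith [sq_nonneg ‖u‖])
              (neg_nonpos.2 (by positivity))
      _ = tcK d c₁ := mul_one _
  · exact (tcK_pos hc₁).le

lemma tc_zero {u : EuclideanSpace ℝ (Fin d)} (hu : 1 < ‖u‖) :
    truncCauchy d c₁ 1 u = 0 := by
  rw [tc_eq, if_neg (not_le.2 hu)]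

lemma tc_congr {u v : EuclideanSpace ℝ (Fin d)} (h : ‖u‖ = ‖v‖) :
    truncCauchy d c₁ 1 u = truncCauchy d c₁ 1 v := by
  rw [tc_eq, tc_eq, h]

lemma tc_measurable : Measurable (truncCauchy d c₁ 1) := by
  have : truncCauchy d c₁ 1 = fun u : EuclideanSpace ℝ (Fin d) =>
      if ‖u‖ ≤ 1 then tcK d c₁ * (1 + ‖u‖ ^ 2) ^ (-(((d : ℝ) + 1) / 2)) else 0 :=
    funext fun u => tc_eq u
  rw [this]
  apply Measurable.ite (measurableSet_le (by fun_prop) measurable_const)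
  · fun_prop
  · exact measurable_const

lemma tc_pos (hc₁ : 0 < c₁) {u : EuclideanSpace ℝ (Fin d)} (hu : ‖u‖ ≤ 1) :
    0 < truncCauchy d c₁ 1 u := by
  rw [tc_eq, if_pos hu]
  exact mul_pos (tcK_pos hc₁) (Real.rpow_pos_of_pos (by positivity) _)



lemma tc_integrable_smul (hc₁ : 0 < c₁) {G : Type*} [NormedAddCommGroup G] [NormedSpace ℝ G]
    (F : EuclideanSpace ℝ (Fin d) → G) (hF : AEStronglyMeasurable F volume) (B : ℝ)
    (hB : ∀ u : EuclideanSpace ℝ (Fin d), ‖u‖ ≤ 1 → ‖F u‖ ≤ B) :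
    Integrable (fun u => truncCauchy d c₁ 1 u • F u) := by
  have hB0 : 0 ≤ B := le_trans (norm_nonneg _) (hB 0 (by simp))
  have hdom : Integrable ((Metric.closedBall (0 : EuclideanSpace ℝ (Fin d)) 1).indicator
      fun _ => tcK d c₁ * B) := by
    rw [integrable_indicator_iff measurableSet_closedBall]
    exact integrableOn_const measure_closedBall_lt_top.ne
  refine Integrable.mono' hdom ((tc_measurable.aestronglyMeasurable).smul hF) ?_
  filter_upwards with u
  by_cases hu : ‖u‖ ≤ 1
  · have : u ∈ Metric.closedBall (0 : EuclideanSpace ℝ (Fin d)) 1 := by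
      simpa [Metric.mem_closedBall, dist_eq_norm] using hu
    rw [Set.indicator_of_mem this, norm_smul, Real.norm_eq_abs,
      abs_of_nonneg (tc_nonneg hc₁ u)]
    exact mul_le_mul (tc_le hc₁ u) (hB u hu) (norm_nonneg _) (tcK_pos hc₁).le
  · rw [tc_zero (not_le.1 hu), zero_smul, norm_zero]
    exact Set.indicator_nonneg (fun _ _ => mul_nonneg (tcK_pos hc₁).le hB0) u

lemma tc_integrable_mul (hc₁ : 0 < c₁)
    (F : EuclideanSpace ℝ (Fin d) → ℝ) (hF : AEStronglyMeasurable F volume) (B : ℝ)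
    (hB : ∀ u : EuclideanSpace ℝ (Fin d), ‖u‖ ≤ 1 → |F u| ≤ B) :
    Integrable (fun u => truncCauchy d c₁ 1 u * F u) := by
  simpa [smul_eq_mul] using tc_integrable_smul hc₁ F hF B (by simpa [Real.norm_eq_abs] using hB)

lemma taylor_bound {f : EuclideanSpace ℝ (Fin d) → ℝ} {L : ℝ}
    (hf : Differentiable ℝ f)
    (hlip : ∀ a b : EuclideanSpace ℝ (Fin d), ‖gradient f a - gradient f b‖ ≤ L * ‖a - b‖)
    (hL : 0 ≤ L) (x y : EuclideanSpace ℝ (Fin d)) :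
    |f y - f x - ⟪gradient f x, y - x⟫| ≤ L * ‖y - x‖ ^ 2 := by
  have key : ∀ z : EuclideanSpace ℝ (Fin d),
      fderiv ℝ f z = InnerProductSpace.toDual ℝ _ (gradient f z) := by
    intro z
    rw [gradient, LinearIsometryEquiv.apply_symm_apply]
  have hbound : ∀ z ∈ Metric.closedBall x ‖y - x‖,
      ‖fderiv ℝ f z - fderiv ℝ f x‖ ≤ L * ‖y - x‖ := by
    intro z hz
    rw [key z, key x, ← LinearIsometryEquiv.map_sub, LinearIsometryEquiv.norm_map]
    have hzx : ‖z - x‖ ≤ ‖y - x‖ := by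
      rw [Metric.mem_closedBall, dist_eq_norm] at hz
      exact hz
    exact (hlip z x).trans (mul_le_mul_of_nonneg_left hzx hL)
  have hxs : x ∈ Metric.closedBall x ‖y - x‖ := Metric.mem_closedBall_self (norm_nonneg _)
  have hys : y ∈ Metric.closedBall x ‖y - x‖ := by
    rw [Metric.mem_closedBall, dist_eq_norm]
  have := (convex_closedBall x ‖y - x‖).norm_image_sub_le_of_norm_fderiv_le'
    (fun z _ => hf z) hbound hxs hys
  rw [key x] at this
  simpa [Real.norm_eq_abs, InnerProductSpace.toDual_apply_apply, sq, mul_assoc] using this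

lemma Q_unit (hd : 0 < d) {a : EuclideanSpace ℝ (Fin d)} (ha : ‖a‖ = 1) :
    ∫ u : EuclideanSpace ℝ (Fin d),
        truncCauchy d c₁ 1 u * (((d : ℝ) + 1) * ⟪u, a⟫ ^ 2 / (1 + ‖u‖ ^ 2))
      = ∫ u : EuclideanSpace ℝ (Fin d),
        truncCauchy d c₁ 1 u * (((d : ℝ) + 1) * (u ⟨0, hd⟩) ^ 2 / (1 + ‖u‖ ^ 2)) := by
  set e₁ : EuclideanSpace ℝ (Fin d) := EuclideanSpace.single ⟨0, hd⟩ (1 : ℝ) with he₁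
  have hne : ‖a‖ = ‖e₁‖ := by
    rw [ha, he₁, EuclideanSpace.norm_single, norm_one]
  set R : EuclideanSpace ℝ (Fin d) ≃ₗᵢ[ℝ] EuclideanSpace ℝ (Fin d) :=
    Submodule.reflection (ℝ ∙ (a - e₁))ᗮ with hR
  have hRa : R a = e₁ := Submodule.reflection_sub hne
  have hRe : R e₁ = a := by rw [← hRa, hR, Submodule.reflection_reflection]
  have hcv := MeasureTheory.integral_comp R (fun u : EuclideanSpace ℝ (Fin d) =>
    truncCauchy d c₁ 1 u * (((d : ℝ) + 1) * ⟪u, a⟫ ^ 2 / (1 + ‖u‖ ^ 2)))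
  rw [← hcv]
  congr 1
  funext u
  have h1 : truncCauchy d c₁ 1 (R u) = truncCauchy d c₁ 1 u :=
    tc_congr (R.norm_map u)
  have h2 : ⟪R u, a⟫ = u ⟨0, hd⟩ := by
    rw [← hRe, LinearIsometryEquiv.inner_map_map, he₁,
      EuclideanSpace.inner_single_right]
    simp
  rw [h1, h2, R.norm_map]

lemma Q_eq (hd : 0 < d) (hc₁ : 0 < c₁) (c₂ : ℝ)
    (hc₂ : c₂ = ∫ u : EuclideanSpace ℝ (Fin d),
      truncCauchy d c₁ 1 u * (((d : ℝ) + 1) * (u ⟨0, hd⟩) ^ 2 / (1 + ‖u‖ ^ 2)))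
    (a : EuclideanSpace ℝ (Fin d)) :
    ∫ u : EuclideanSpace ℝ (Fin d),
        truncCauchy d c₁ 1 u * (((d : ℝ) + 1) * ⟪u, a⟫ ^ 2 / (1 + ‖u‖ ^ 2))
      = c₂ * ‖a‖ ^ 2 := by
  rcases eq_or_ne a 0 with rfl | ha
  · simp
  · have hna : (0 : ℝ) < ‖a‖ := norm_pos_iff.2 ha
    set b : EuclideanSpace ℝ (Fin d) := ‖a‖⁻¹ • a with hb
    have hnb : ‖b‖ = 1 := by
      rw [hb, norm_smul, norm_inv, norm_norm, inv_mul_cancel₀ hna.ne']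
    have hab : a = ‖a‖ • b := by rw [hb, smul_smul, mul_inv_cancel₀ hna.ne', one_smul]
    have key : ∀ u : EuclideanSpace ℝ (Fin d),
        truncCauchy d c₁ 1 u * (((d : ℝ) + 1) * ⟪u, a⟫ ^ 2 / (1 + ‖u‖ ^ 2))
          = ‖a‖ ^ 2 * (truncCauchy d c₁ 1 u *
              (((d : ℝ) + 1) * ⟪u, b⟫ ^ 2 / (1 + ‖u‖ ^ 2))) := by
      intro u
      have hinner : ⟪u, a⟫ = ‖a‖ * ⟪u, b⟫ := by
        rw [hb, real_inner_smul_right]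
        field_simp
      rw [hinner]
      ring
    simp_rw [key]
    rw [MeasureTheory.integral_const_mul, Q_unit hd hnb, ← hc₂]
    ring

lemma integrable_Q (hc₁ : 0 < c₁) (a : EuclideanSpace ℝ (Fin d)) :
    Integrable (fun u : EuclideanSpace ℝ (Fin d) =>
      truncCauchy d c₁ 1 u * (((d : ℝ) + 1) * ⟪u, a⟫ ^ 2 / (1 + ‖u‖ ^ 2))) := by
  apply tc_integrable_mul hc₁ _ ?_ (((d : ℝ) + 1) * ‖a‖ ^ 2)
  · intro u hu
    have h1 : ⟪u, a⟫ ^ 2 ≤ ‖a‖ ^ 2 := by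
      have h2 := abs_real_inner_le_norm u a
      have h3 : |⟪u, a⟫| ≤ ‖a‖ := h2.trans (by nlinarith [norm_nonneg a])
      nlinarith [abs_nonneg ⟪u, a⟫, sq_abs ⟪u, a⟫]
    rw [abs_of_nonneg (by positivity), div_le_iff₀ (by positivity)]
    nlinarith [sq_nonneg ‖u‖, norm_nonneg a, Nat.cast_nonneg (α := ℝ) d, sq_nonneg (‖a‖ * ‖u‖)]
  · apply Continuous.aestronglyMeasurable
    apply Continuous.div
    · exact continuous_const.mul ((continuous_id.inner continuous_const).pow 2)
    · fun_prop
    · intro u; positivity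

lemma T_eq (hd : 0 < d) (hc₁ : 0 < c₁) (c₂ : ℝ)
    (hc₂ : c₂ = ∫ u : EuclideanSpace ℝ (Fin d),
      truncCauchy d c₁ 1 u * (((d : ℝ) + 1) * (u ⟨0, hd⟩) ^ 2 / (1 + ‖u‖ ^ 2)))
    (g : EuclideanSpace ℝ (Fin d)) :
    ∫ u : EuclideanSpace ℝ (Fin d),
        (truncCauchy d c₁ 1 u * (⟪u, g⟫ * (((d : ℝ) + 1) / (1 + ‖u‖ ^ 2)))) • u
      = c₂ • g := by
  have hInt : Integrable (fun u : EuclideanSpace ℝ (Fin d) =>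
      truncCauchy d c₁ 1 u • ((⟪u, g⟫ * (((d : ℝ) + 1) / (1 + ‖u‖ ^ 2))) • u)) := by
    apply tc_integrable_smul hc₁ _ ?_ (‖g‖ * ((d : ℝ) + 1))
    · intro u hu
      rw [norm_smul, Real.norm_eq_abs, abs_mul]
      have h3 : |⟪u, g⟫| ≤ ‖g‖ := (abs_real_inner_le_norm u g).trans
        (by nlinarith [norm_nonneg g])
      have h4 : |((d : ℝ) + 1) / (1 + ‖u‖ ^ 2)| ≤ (d : ℝ) + 1 := by
        rw [abs_of_nonneg (by positivity), div_le_iff₀ (by positivity)]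
        nlinarith [sq_nonneg ‖u‖, Nat.cast_nonneg (α := ℝ) d]
      calc |⟪u, g⟫| * |((d : ℝ) + 1) / (1 + ‖u‖ ^ 2)| * ‖u‖
          ≤ ‖g‖ * (((d : ℝ) + 1)) * 1 := by
            apply mul_le_mul (mul_le_mul h3 h4 (abs_nonneg _) (norm_nonneg _)) hu
              (norm_nonneg _)
            positivity
        _ = ‖g‖ * ((d : ℝ) + 1) := mul_one _
    · apply Continuous.aestronglyMeasurable
      apply Continuous.fun_smul _ continuous_id
      apply Continuous.mul (continuous_id.inner continuous_const)
      apply Continuous.div continuous_const (by fun_prop)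
      intro u; positivity
  have hform : (fun u : EuclideanSpace ℝ (Fin d) =>
      (truncCauchy d c₁ 1 u * (⟪u, g⟫ * (((d : ℝ) + 1) / (1 + ‖u‖ ^ 2)))) • u)
      = fun u : EuclideanSpace ℝ (Fin d) =>
      truncCauchy d c₁ 1 u • ((⟪u, g⟫ * (((d : ℝ) + 1) / (1 + ‖u‖ ^ 2))) • u) := by
    funext u; rw [mul_smul]
  rw [hform]
  apply ext_inner_left ℝ
  intro v
  rw [← integral_inner hInt v, real_inner_smul_right]
  have hpt : ∀ u : EuclideanSpace ℝ (Fin d),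
      ⟪v, truncCauchy d c₁ 1 u • ((⟪u, g⟫ * (((d : ℝ) + 1) / (1 + ‖u‖ ^ 2))) • u)⟫
        = (truncCauchy d c₁ 1 u * (((d : ℝ) + 1) * ⟪u, g + v⟫ ^ 2 / (1 + ‖u‖ ^ 2))
          - truncCauchy d c₁ 1 u * (((d : ℝ) + 1) * ⟪u, g - v⟫ ^ 2 / (1 + ‖u‖ ^ 2))) / 4 := by
    intro u
    rw [real_inner_smul_right, real_inner_smul_right]
    have hD : (1 : ℝ) + ‖u‖ ^ 2 ≠ 0 := by positivity
    have hcomm : ⟪v, u⟫ = ⟪u, v⟫ := real_inner_comm u v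
    simp only [inner_add_right, inner_sub_right, hcomm]
    field_simp
    ring
  simp_rw [hpt]
  rw [integral_div, integral_sub (integrable_Q hc₁ (g + v)) (integrable_Q hc₁ (g - v)),
    Q_eq hd hc₁ c₂ hc₂, Q_eq hd hc₁ c₂ hc₂]
  have hn1 : ‖g + v‖ ^ 2 = ‖g‖ ^ 2 + 2 * ⟪g, v⟫ + ‖v‖ ^ 2 := norm_add_sq_real g v
  have hn2 : ‖g - v‖ ^ 2 = ‖g‖ ^ 2 - 2 * ⟪g, v⟫ + ‖v‖ ^ 2 := norm_sub_sq_real g v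
  rw [hn1, hn2, real_inner_comm v g]
  ring

lemma tc_integrable (hc₁ : 0 < c₁) :
    Integrable (truncCauchy d c₁ 1) := by
  simpa using tc_integrable_mul hc₁ (fun _ => (1 : ℝ)) aestronglyMeasurable_const 1
    (fun u _ => by simp)

lemma c2_pos (hd : 0 < d) (hc₁ : 0 < c₁) :
    0 < ∫ u : EuclideanSpace ℝ (Fin d),
      truncCauchy d c₁ 1 u * (((d : ℝ) + 1) * (u ⟨0, hd⟩) ^ 2 / (1 + ‖u‖ ^ 2)) := by
  set e₁ : EuclideanSpace ℝ (Fin d) := EuclideanSpace.single ⟨0, hd⟩ (1 : ℝ) with he₁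
  set F : EuclideanSpace ℝ (Fin d) → ℝ := fun u =>
    truncCauchy d c₁ 1 u * (((d : ℝ) + 1) * (u ⟨0, hd⟩) ^ 2 / (1 + ‖u‖ ^ 2)) with hF
  have hinteq : ∀ u : EuclideanSpace ℝ (Fin d), (u ⟨0, hd⟩) = ⟪u, e₁⟫ := fun u => by
    rw [he₁, EuclideanSpace.inner_single_right]; simp
  have hnn : ∀ u, 0 ≤ F u := fun u =>
    mul_nonneg (tc_nonneg hc₁ u) (by positivity)
  have hint : Integrable F := by
    have h := integrable_Q hc₁ e₁
    rw [hF]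
    simp_rw [hinteq]
    exact h
  rw [integral_pos_iff_support_of_nonneg hnn hint]
  have hN : volume {u : EuclideanSpace ℝ (Fin d) | u ⟨0, hd⟩ = 0} = 0 := by
    have hset : {u : EuclideanSpace ℝ (Fin d) | u ⟨0, hd⟩ = 0}
        = ((ℝ ∙ e₁)ᗮ : Submodule ℝ (EuclideanSpace ℝ (Fin d))) := by
      ext u
      rw [Set.mem_setOf_eq, SetLike.mem_coe,
        Submodule.mem_orthogonal_singleton_iff_inner_right, hinteq u, real_inner_comm]
    rw [hset]
    apply MeasureTheory.Measure.addHaar_submodule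
    intro htop
    have hmem : e₁ ∈ (ℝ ∙ e₁)ᗮ := by rw [htop]; trivial
    rw [Submodule.mem_orthogonal_singleton_iff_inner_right] at hmem
    rw [← hinteq e₁, he₁] at hmem
    simp [EuclideanSpace.single_apply] at hmem
  have hsub : Metric.ball (0 : EuclideanSpace ℝ (Fin d)) 1
      \ {u : EuclideanSpace ℝ (Fin d) | u ⟨0, hd⟩ = 0} ⊆ Function.support F := by
    intro u hu
    obtain ⟨hu1, hu2⟩ := hu
    rw [Metric.mem_ball, dist_zero_right] at hu1
    rw [Set.mem_setOf_eq] at hu2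
    apply ne_of_gt
    apply mul_pos (tc_pos hc₁ hu1.le)
    have : (0:ℝ) < (u ⟨0, hd⟩) ^ 2 := by positivity
    positivity
  calc (0 : ℝ≥0∞) < volume (Metric.ball (0 : EuclideanSpace ℝ (Fin d)) 1) :=
        Metric.measure_ball_pos volume 0 one_pos
    _ = volume (Metric.ball (0 : EuclideanSpace ℝ (Fin d)) 1
          \ {u : EuclideanSpace ℝ (Fin d) | u ⟨0, hd⟩ = 0}) :=
        (measure_diff_null hN).symm
    _ ≤ volume (Function.support F) := measure_mono hsub

lemma c11_ge (hd : 0 < d) (hc₁ : 0 < c₁)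
    (hnorm : ∫ u : EuclideanSpace ℝ (Fin d), truncCauchy d c₁ 1 u = 1) :
    (d : ℝ) ≤ 2 * Real.Gamma (((d : ℝ) + 1) / 2) /
      (Real.sqrt Real.pi * Real.Gamma ((d : ℝ) / 2) * c₁) := by
  set G : ℝ := Real.Gamma (((d : ℝ) + 1) / 2) with hG
  have hGpos : 0 < G := Real.Gamma_pos_of_pos (by positivity)
  have hGd : 0 < Real.Gamma ((d : ℝ) / 2) := Real.Gamma_pos_of_pos (by positivity)
  have hGd1 : Real.Gamma ((d : ℝ) / 2 + 1) = ((d : ℝ) / 2) * Real.Gamma ((d : ℝ) / 2) :=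
    Real.Gamma_add_one (by positivity)
  have hsπ : (0 : ℝ) < Real.sqrt Real.pi := Real.sqrt_pos.2 Real.pi_pos
  set V : ℝ := Real.sqrt Real.pi ^ d / Real.Gamma ((d : ℝ) / 2 + 1) with hV
  have hVpos : 0 < V := by
    rw [hV]; positivity
  -- volume of the closed unit ball
  haveI : Nonempty (Fin d) := ⟨⟨0, hd⟩⟩
  have hvol : (volume (Metric.closedBall (0 : EuclideanSpace ℝ (Fin d)) 1)).toReal = V := by
    rw [EuclideanSpace.volume_closedBall, Fintype.card_fin]
    rw [ENNReal.ofReal_one, one_pow, one_mul, ENNReal.toReal_ofReal (by positivity)]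
  -- 1 ≤ tcK * V
  have hmain : 1 ≤ tcK d c₁ * V := by
    have hmono : ∫ u : EuclideanSpace ℝ (Fin d), truncCauchy d c₁ 1 u
        ≤ ∫ u : EuclideanSpace ℝ (Fin d),
          (Metric.closedBall (0 : EuclideanSpace ℝ (Fin d)) 1).indicator
            (fun _ => tcK d c₁) u := by
      apply integral_mono (tc_integrable hc₁)
      · rw [integrable_indicator_iff measurableSet_closedBall]
        exact integrableOn_const measure_closedBall_lt_top.ne
      · intro u
        by_cases hu : ‖u‖ ≤ 1
        · rw [Set.indicator_of_mem (by simpa [Metric.mem_closedBall, dist_eq_norm] using hu)]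
          exact tc_le hc₁ u
        · rw [tc_zero (not_le.1 hu)]
          exact Set.indicator_nonneg (fun _ _ => (tcK_pos hc₁).le) u
    rw [hnorm] at hmono
    rwa [MeasureTheory.integral_indicator_const _ measurableSet_closedBall, measureReal_def, hvol,
      smul_eq_mul, mul_comm] at hmono
  -- π ^ ((d+1)/2) = √π ^ (d+1)
  have hpow : Real.pi ^ (((d : ℝ) + 1) / 2) = Real.sqrt Real.pi ^ (d + 1) := by
    rw [Real.sqrt_eq_rpow, ← Real.rpow_natCast (Real.pi ^ ((1:ℝ)/2)) (d + 1),
      ← Real.rpow_mul Real.pi_pos.le]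
    congr 1
    push_cast
    ring
  -- conclude
  have hc₁le : c₁ ≤ G * V / Real.pi ^ (((d : ℝ) + 1) / 2) := by
    have hπp : (0 : ℝ) < Real.pi ^ (((d : ℝ) + 1) / 2) := Real.rpow_pos_of_pos Real.pi_pos _
    rw [tcK, ← hG, div_mul_eq_mul_div, le_div_iff₀ (by positivity)] at hmain
    rw [le_div_iff₀ hπp]
    nlinarith
  rw [le_div_iff₀ (by positivity)]
  have hπp : (0 : ℝ) < Real.pi ^ (((d : ℝ) + 1) / 2) := Real.rpow_pos_of_pos Real.pi_pos _
  have step : (d : ℝ) * (Real.sqrt Real.pi * Real.Gamma ((d : ℝ) / 2) * c₁)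
      ≤ (d : ℝ) * (Real.sqrt Real.pi * Real.Gamma ((d : ℝ) / 2) *
          (G * V / Real.pi ^ (((d : ℝ) + 1) / 2))) := by
    have hdpos : (0 : ℝ) < d := by exact_mod_cast hd
    have := mul_le_mul_of_nonneg_left hc₁le
      (mul_nonneg (mul_nonneg hsπ.le hGd.le) hdpos.le)
    nlinarith
  refine step.trans (le_of_eq ?_)
  rw [hpow, hV, hGd1]
  have hd0 : ((d : ℝ)) ≠ 0 := Nat.cast_ne_zero.2 hd.ne'
  field_simp
  ring

lemma integrable_T (hc₁ : 0 < c₁) (g : EuclideanSpace ℝ (Fin d)) :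
    Integrable (fun u : EuclideanSpace ℝ (Fin d) =>
      (truncCauchy d c₁ 1 u * (⟪u, g⟫ * (((d : ℝ) + 1) / (1 + ‖u‖ ^ 2)))) • u) := by
  have hform : (fun u : EuclideanSpace ℝ (Fin d) =>
      (truncCauchy d c₁ 1 u * (⟪u, g⟫ * (((d : ℝ) + 1) / (1 + ‖u‖ ^ 2)))) • u)
      = fun u : EuclideanSpace ℝ (Fin d) =>
      truncCauchy d c₁ 1 u • ((⟪u, g⟫ * (((d : ℝ) + 1) / (1 + ‖u‖ ^ 2))) • u) := by
    funext u; rw [mul_smul]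
  rw [hform]
  apply tc_integrable_smul hc₁ _ ?_ (‖g‖ * ((d : ℝ) + 1))
  · intro u hu
    rw [norm_smul, Real.norm_eq_abs, abs_mul]
    have h3 : |⟪u, g⟫| ≤ ‖g‖ := (abs_real_inner_le_norm u g).trans
      (by nlinarith [norm_nonneg g])
    have h4 : |((d : ℝ) + 1) / (1 + ‖u‖ ^ 2)| ≤ (d : ℝ) + 1 := by
      rw [abs_of_nonneg (by positivity), div_le_iff₀ (by positivity)]
      nlinarith [sq_nonneg ‖u‖, Nat.cast_nonneg (α := ℝ) d]
    calc |⟪u, g⟫| * |((d : ℝ) + 1) / (1 + ‖u‖ ^ 2)| * ‖u‖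
        ≤ ‖g‖ * (((d : ℝ) + 1)) * 1 := by
          apply mul_le_mul (mul_le_mul h3 h4 (abs_nonneg _) (norm_nonneg _)) hu
            (norm_nonneg _)
          positivity
      _ = ‖g‖ * ((d : ℝ) + 1) := mul_one _
  · apply Continuous.aestronglyMeasurable
    apply Continuous.fun_smul _ continuous_id
    apply Continuous.mul (continuous_id.inner continuous_const)
    apply Continuous.div continuous_const (by fun_prop)
    intro u; positivity

end Aux

set_option maxHeartbeats 1000000 in
/-- Lower-bounding the true gradient by the one-sided smoothed gradient:
`‖∇f(x)‖² ≤ 2c₁₂‖∇f_δ(x)‖² + c₁₁c₁₂δ²L²(d+1)` with `c₁₂ = d/c₂²`. -/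
theorem true_gradient_bound_by_smoothed
    (d : ℕ) (hd : 0 < d) (c₁ : ℝ) (hc₁ : 0 < c₁)
    (hnorm : ∫ u : EuclideanSpace ℝ (Fin d), truncCauchy d c₁ 1 u = 1)
    (f : EuclideanSpace ℝ (Fin d) → ℝ) (L : ℝ)
    (hf : Differentiable ℝ f)
    (hlip : ∀ a b : EuclideanSpace ℝ (Fin d), ‖gradient f a - gradient f b‖ ≤ L * ‖a - b‖)
    (c₂ c₁₁ c₁₂ : ℝ)
    (hc₂ : c₂ = ∫ u : EuclideanSpace ℝ (Fin d),
      truncCauchy d c₁ 1 u * (((d : ℝ) + 1) * (u ⟨0, hd⟩) ^ 2 / (1 + ‖u‖ ^ 2)))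
    (hc₁₁ : c₁₁ = 2 * Real.Gamma (((d : ℝ) + 1) / 2) /
      (Real.sqrt Real.pi * Real.Gamma ((d : ℝ) / 2) * c₁))
    (hc₁₂ : c₁₂ = (d : ℝ) / c₂ ^ 2)
    (δ : ℝ) (hδ : 0 < δ) (x : EuclideanSpace ℝ (Fin d))
    (gradfδ : EuclideanSpace ℝ (Fin d))
    (hgradfδ : gradfδ = δ⁻¹ • ∫ u : EuclideanSpace ℝ (Fin d),
      (truncCauchy d c₁ 1 u * ((f (x + δ • u) - f x) * (((d : ℝ) + 1) / (1 + ‖u‖ ^ 2)))) • u) :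
    ‖gradient f x‖ ^ 2 ≤ 2 * c₁₂ * ‖gradfδ‖ ^ 2 + c₁₁ * c₁₂ * δ ^ 2 * L ^ 2 * ((d : ℝ) + 1) := by
  set g : EuclideanSpace ℝ (Fin d) := gradient f x with hg
  -- L is nonnegative
  have hL : 0 ≤ L := by
    have h := hlip (EuclideanSpace.single ⟨0, hd⟩ (1 : ℝ)) 0
    have h1 : ‖EuclideanSpace.single (⟨0, hd⟩ : Fin d) (1 : ℝ) - 0‖ = 1 := by
      rw [sub_zero, EuclideanSpace.norm_single, norm_one]
    rw [h1, mul_one] at h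
    exact le_trans (norm_nonneg _) h
  -- the Taylor remainder
  set r : EuclideanSpace ℝ (Fin d) → ℝ :=
    fun u => f (x + δ • u) - f x - δ * ⟪u, g⟫ with hr
  have htay : ∀ u : EuclideanSpace ℝ (Fin d), |r u| ≤ L * δ ^ 2 * ‖u‖ ^ 2 := by
    intro u
    have h := taylor_bound hf hlip hL x (x + δ • u)
    have h2 : x + δ • u - x = δ • u := add_sub_cancel_left x _
    rw [h2, real_inner_smul_right, norm_smul, Real.norm_eq_abs, abs_of_pos hδ] at h
    rw [hr]
    have h3 : ⟪g, u⟫ = ⟪u, g⟫ := real_inner_comm u g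
    rw [h3] at h
    calc |f (x + δ • u) - f x - δ * ⟪u, g⟫| ≤ L * (δ * ‖u‖) ^ 2 := h
      _ = L * δ ^ 2 * ‖u‖ ^ 2 := by ring
  have hrcont : Continuous r := by
    rw [hr]
    apply Continuous.sub
    · apply Continuous.sub _ continuous_const
      exact hf.continuous.comp (by fun_prop)
    · exact continuous_const.mul (continuous_id.inner continuous_const)
  -- integrability of the two pieces
  have hA := integrable_T hc₁ g
  have hB : Integrable (fun u : EuclideanSpace ℝ (Fin d) =>
      (truncCauchy d c₁ 1 u * (r u * (((d : ℝ) + 1) / (1 + ‖u‖ ^ 2)))) • u) := by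
    have hform : (fun u : EuclideanSpace ℝ (Fin d) =>
        (truncCauchy d c₁ 1 u * (r u * (((d : ℝ) + 1) / (1 + ‖u‖ ^ 2)))) • u)
        = fun u : EuclideanSpace ℝ (Fin d) =>
        truncCauchy d c₁ 1 u • ((r u * (((d : ℝ) + 1) / (1 + ‖u‖ ^ 2))) • u) := by
      funext u; rw [mul_smul]
    rw [hform]
    apply tc_integrable_smul hc₁ _ ?_ (L * δ ^ 2 * ((d : ℝ) + 1))
    · intro u hu
      rw [norm_smul, Real.norm_eq_abs, abs_mul]
      have h1 : |r u| ≤ L * δ ^ 2 := by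
        refine (htay u).trans ?_
        have h0 : ‖u‖ ^ 2 ≤ 1 := by nlinarith [norm_nonneg u]
        nlinarith [mul_nonneg hL (sq_nonneg δ)]
      have h4 : |((d : ℝ) + 1) / (1 + ‖u‖ ^ 2)| ≤ (d : ℝ) + 1 := by
        rw [abs_of_nonneg (by positivity), div_le_iff₀ (by positivity)]
        nlinarith [sq_nonneg ‖u‖, Nat.cast_nonneg (α := ℝ) d]
      calc |r u| * |((d : ℝ) + 1) / (1 + ‖u‖ ^ 2)| * ‖u‖
          ≤ (L * δ ^ 2) * ((d : ℝ) + 1) * 1 := by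
            apply mul_le_mul (mul_le_mul h1 h4 (abs_nonneg _) (by positivity)) hu
              (norm_nonneg _)
            positivity
        _ = L * δ ^ 2 * ((d : ℝ) + 1) := mul_one _
    · apply Continuous.aestronglyMeasurable
      apply Continuous.fun_smul _ continuous_id
      apply Continuous.mul hrcont
      apply Continuous.div continuous_const (by fun_prop)
      intro u; positivity
  -- split the smoothed-gradient integral
  have hsplit : (fun u : EuclideanSpace ℝ (Fin d) =>
      (truncCauchy d c₁ 1 u * ((f (x + δ • u) - f x) * (((d : ℝ) + 1) / (1 + ‖u‖ ^ 2)))) • u)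
      = fun u : EuclideanSpace ℝ (Fin d) =>
        δ • ((truncCauchy d c₁ 1 u * (⟪u, g⟫ * (((d : ℝ) + 1) / (1 + ‖u‖ ^ 2)))) • u)
        + (truncCauchy d c₁ 1 u * (r u * (((d : ℝ) + 1) / (1 + ‖u‖ ^ 2)))) • u := by
    funext u
    rw [smul_smul, ← add_smul]
    congr 1
    have : f (x + δ • u) - f x = δ * ⟪u, g⟫ + r u := by rw [hr]; ring
    rw [this]
    ring
  set Er : EuclideanSpace ℝ (Fin d) :=
    ∫ u : EuclideanSpace ℝ (Fin d),
      (truncCauchy d c₁ 1 u * (r u * (((d : ℝ) + 1) / (1 + ‖u‖ ^ 2)))) • u with hEr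
  have hI : (∫ u : EuclideanSpace ℝ (Fin d),
      (truncCauchy d c₁ 1 u * ((f (x + δ • u) - f x) * (((d : ℝ) + 1) / (1 + ‖u‖ ^ 2)))) • u)
      = δ • (c₂ • g) + Er := by
    have hA' : Integrable (fun u : EuclideanSpace ℝ (Fin d) =>
        δ • ((truncCauchy d c₁ 1 u * (⟪u, g⟫ * (((d : ℝ) + 1) / (1 + ‖u‖ ^ 2)))) • u)) :=
      hA.smul δ
    rw [hsplit, integral_add hA' hB, integral_smul, T_eq hd hc₁ c₂ hc₂ g, hEr]
  have hgd : gradfδ = c₂ • g + δ⁻¹ • Er := by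
    rw [hgradfδ, hI, smul_add, smul_smul, inv_mul_cancel₀ hδ.ne', one_smul]
  -- bound on the error term
  have hErb : ‖Er‖ ≤ L * δ ^ 2 * ((d : ℝ) + 1) / 2 := by
    have hbd : ∀ u : EuclideanSpace ℝ (Fin d),
        ‖(truncCauchy d c₁ 1 u * (r u * (((d : ℝ) + 1) / (1 + ‖u‖ ^ 2)))) • u‖
          ≤ truncCauchy d c₁ 1 u * (L * δ ^ 2 * ((d : ℝ) + 1) / 2) := by
      intro u
      by_cases hu : ‖u‖ ≤ 1
      · rw [norm_smul, Real.norm_eq_abs, abs_mul, abs_of_nonneg (tc_nonneg hc₁ u), abs_mul,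
          abs_of_nonneg (show (0:ℝ) ≤ ((d : ℝ) + 1) / (1 + ‖u‖ ^ 2) by positivity), mul_assoc,
          mul_assoc]
        apply mul_le_mul_of_nonneg_left _ (tc_nonneg hc₁ u)
        have hq : ((d : ℝ) + 1) / (1 + ‖u‖ ^ 2) * ‖u‖ * ‖u‖ ^ 2 ≤ ((d : ℝ) + 1) / 2 := by
          rw [div_mul_eq_mul_div, div_mul_eq_mul_div, div_le_div_iff₀ (by positivity)
            (by norm_num)]
          have h1t : ‖u‖ ^ 2 ≤ 1 := by nlinarith [norm_nonneg u]
          have h2t : (0:ℝ) ≤ ‖u‖ ^ 2 * (1 - ‖u‖) :=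
            mul_nonneg (sq_nonneg _) (by linarith)
          have hd0 : (0:ℝ) ≤ (d : ℝ) := Nat.cast_nonneg d
          nlinarith [mul_nonneg hd0 h2t, mul_nonneg hd0 (sub_nonneg.2 h1t)]
        calc |r u| * (((d : ℝ) + 1) / (1 + ‖u‖ ^ 2) * ‖u‖)
            ≤ (L * δ ^ 2 * ‖u‖ ^ 2) * (((d : ℝ) + 1) / (1 + ‖u‖ ^ 2) * ‖u‖) := by
              apply mul_le_mul_of_nonneg_right (htay u) (by positivity)
          _ = (L * δ ^ 2) * (((d : ℝ) + 1) / (1 + ‖u‖ ^ 2) * ‖u‖ * ‖u‖ ^ 2) := by ring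
          _ ≤ (L * δ ^ 2) * (((d : ℝ) + 1) / 2) := by
              apply mul_le_mul_of_nonneg_left hq (by positivity)
          _ = L * δ ^ 2 * ((d : ℝ) + 1) / 2 := by ring
      · rw [tc_zero (not_le.1 hu), zero_mul, zero_smul, norm_zero, zero_mul]
    calc ‖Er‖ ≤ ∫ u : EuclideanSpace ℝ (Fin d),
          truncCauchy d c₁ 1 u * (L * δ ^ 2 * ((d : ℝ) + 1) / 2) :=
        norm_integral_le_of_norm_le ((tc_integrable hc₁).mul_const _)
          (Filter.Eventually.of_forall hbd)
      _ = L * δ ^ 2 * ((d : ℝ) + 1) / 2 := by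
          rw [integral_mul_const, hnorm, one_mul]
  -- c₂ is positive
  have hc₂pos : 0 < c₂ := by rw [hc₂]; exact c2_pos hd hc₁
  -- main norm bound
  have hgnorm : c₂ * ‖g‖ ≤ ‖gradfδ‖ + L * δ * ((d : ℝ) + 1) / 2 := by
    have h8 : c₂ • g = gradfδ - δ⁻¹ • Er := by rw [hgd]; abel
    have h9 : ‖c₂ • g‖ = c₂ * ‖g‖ := by
      rw [norm_smul, Real.norm_eq_abs, abs_of_pos hc₂pos]
    have h10 : ‖δ⁻¹ • Er‖ ≤ L * δ * ((d : ℝ) + 1) / 2 := by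
      rw [norm_smul, Real.norm_eq_abs, abs_of_pos (inv_pos.2 hδ)]
      calc δ⁻¹ * ‖Er‖ ≤ δ⁻¹ * (L * δ ^ 2 * ((d : ℝ) + 1) / 2) := by
            apply mul_le_mul_of_nonneg_left hErb (inv_pos.2 hδ).le
        _ = L * δ * ((d : ℝ) + 1) / 2 := by field_simp
    calc c₂ * ‖g‖ = ‖gradfδ - δ⁻¹ • Er‖ := by rw [← h9, h8]
      _ ≤ ‖gradfδ‖ + ‖δ⁻¹ • Er‖ := norm_sub_le _ _
      _ ≤ ‖gradfδ‖ + L * δ * ((d : ℝ) + 1) / 2 := by linarith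
  -- final arithmetic
  have hc₁₁d : (d : ℝ) ≤ c₁₁ := by rw [hc₁₁]; exact c11_ge hd hc₁ hnorm
  have hd1 : (1 : ℝ) ≤ (d : ℝ) := by exact_mod_cast hd
  set P : ℝ := ‖gradfδ‖ with hP
  set Q : ℝ := L * δ * ((d : ℝ) + 1) / 2 with hQ
  have hPnn : 0 ≤ P := norm_nonneg _
  have hQnn : 0 ≤ Q := by rw [hQ]; positivity
  have hc2sq : (0:ℝ) < c₂ ^ 2 := by positivity
  set s : ℝ := (c₂ ^ 2)⁻¹ with hs
  have hspos : 0 < s := inv_pos.2 hc2sq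
  have hsc : s * c₂ ^ 2 = 1 := inv_mul_cancel₀ hc2sq.ne'
  have hds : (d : ℝ) / c₂ ^ 2 = (d : ℝ) * s := div_eq_mul_inv _ _
  rw [hc₁₂, hds]
  have h1 : (c₂ * ‖g‖) ^ 2 ≤ (P + Q) ^ 2 := by
    apply sq_le_sq' _ hgnorm
    nlinarith [mul_nonneg hc₂pos.le (norm_nonneg g)]
  have hgn : ‖g‖ ^ 2 ≤ s * (2 * P ^ 2 + 2 * Q ^ 2) := by
    have h2 : c₂ ^ 2 * ‖g‖ ^ 2 ≤ 2 * P ^ 2 + 2 * Q ^ 2 := by nlinarith [sq_nonneg (P - Q)]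
    have h3 := mul_le_mul_of_nonneg_left h2 hspos.le
    calc ‖g‖ ^ 2 = (s * c₂ ^ 2) * ‖g‖ ^ 2 := by rw [hsc, one_mul]
      _ = s * (c₂ ^ 2 * ‖g‖ ^ 2) := by ring
      _ ≤ s * (2 * P ^ 2 + 2 * Q ^ 2) := h3
  have hterm1 : s * (2 * P ^ 2) ≤ 2 * ((d : ℝ) * s) * P ^ 2 := by
    nlinarith [mul_nonneg hspos.le (sq_nonneg P)]
  have hkey : ((d : ℝ) + 1) / 2 ≤ c₁₁ * (d : ℝ) := by nlinarith
  have hterm2 : s * (2 * Q ^ 2) ≤ c₁₁ * ((d : ℝ) * s) * δ ^ 2 * L ^ 2 * ((d : ℝ) + 1) := by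
    have hfac : (0:ℝ) ≤ s * (δ ^ 2 * L ^ 2 * ((d : ℝ) + 1)) := by positivity
    have := mul_le_mul_of_nonneg_left hkey hfac
    calc s * (2 * Q ^ 2) = s * (δ ^ 2 * L ^ 2 * ((d : ℝ) + 1)) * (((d : ℝ) + 1) / 2) := by
          rw [hQ]; ring
      _ ≤ s * (δ ^ 2 * L ^ 2 * ((d : ℝ) + 1)) * (c₁₁ * (d : ℝ)) := this
      _ = c₁₁ * ((d : ℝ) * s) * δ ^ 2 * L ^ 2 * ((d : ℝ) + 1) := by ring
  calc ‖g‖ ^ 2 ≤ s * (2 * P ^ 2 + 2 * Q ^ 2) := hgn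
    _ = s * (2 * P ^ 2) + s * (2 * Q ^ 2) := by ring
    _ ≤ 2 * ((d : ℝ) * s) * P ^ 2 + c₁₁ * ((d : ℝ) * s) * δ ^ 2 * L ^ 2 * ((d : ℝ) + 1) := by
        linarith
end

section
/- Let d ≥ 1 and let f : ℝ^d → ℝ be three times continuously differentiable with |∂³_{ijk}f(x)| ≤ B₁ for all indices i, j, k and all x. Set c₂″ = B₁d⁴/3. Then for every x ∈ ℝ^d, every δ > 0, and every coordinate j ∈ {1,…,d}, the balanced (two-sided) estimator satisfies | E_u[ ((f(x + δu) − f(x − δu))/(2δ)) · (d+1)u_j/(1+‖u‖²) ] − c₂·∂_j f(x) | ≤ c₂″·δ², where u is distributed with the unit-scale truncated Cauchy density h and c₂ = E_u[(d+1)u₁²/(1+‖u‖²)]. -/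
open MeasureTheory Real Filter Topology ProbabilityTheory

lemma truncCauchy_nonneg {d : ℕ} {c₁ : ℝ} (hc₁ : 0 < c₁) (u : EuclideanSpace ℝ (Fin d)) :
    0 ≤ truncCauchy d c₁ 1 u := by
  unfold truncCauchy
  split
  · have h1 : 0 < Real.Gamma (((d : ℝ) + 1) / 2) := Real.Gamma_pos_of_pos (by positivity)
    have h2 : (0:ℝ) < Real.pi ^ (((d : ℝ) + 1) / 2) := Real.rpow_pos_of_pos Real.pi_pos _
    have h3 : (0:ℝ) ≤ (1 + ‖u‖ ^ 2 / (1:ℝ) ^ 2) ^ (-(((d : ℝ) + 1) / 2)) :=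
      Real.rpow_nonneg (by positivity) _
    positivity
  · exact le_refl 0

lemma truncCauchy_eq_of_norm_eq {d : ℕ} {c₁ : ℝ} {u w : EuclideanSpace ℝ (Fin d)}
    (h : ‖u‖ = ‖w‖) : truncCauchy d c₁ 1 u = truncCauchy d c₁ 1 w := by
  unfold truncCauchy; rw [h]

lemma truncCauchy_of_norm_gt {d : ℕ} {c₁ : ℝ} {u : EuclideanSpace ℝ (Fin d)}
    (h : ¬ ‖u‖ ≤ 1) : truncCauchy d c₁ 1 u = 0 := if_neg h

lemma truncCauchy_mul_integrable {d : ℕ} {c₁ : ℝ} {g : EuclideanSpace ℝ (Fin d) → ℝ}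
    (hg : Continuous g) :
    Integrable (fun u => truncCauchy d c₁ 1 u * g u) := by
  have hcont : Continuous fun u : EuclideanSpace ℝ (Fin d) =>
      (Real.Gamma (((d : ℝ) + 1) / 2) / (Real.pi ^ (((d : ℝ) + 1) / 2) * c₁ * (1:ℝ) ^ d) *
        (1 + ‖u‖ ^ 2 / (1:ℝ) ^ 2) ^ (-(((d : ℝ) + 1) / 2))) * g u := by
    refine (continuous_const.mul ?_).mul hg
    refine Continuous.rpow_const ?_ ?_
    · fun_prop
    · intro u; left; positivity
  have hmeq : (fun u => truncCauchy d c₁ 1 u * g u) =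
      (Metric.closedBall (0 : EuclideanSpace ℝ (Fin d)) 1).indicator
        (fun u => truncCauchy d c₁ 1 u * g u) := by
    funext u
    by_cases h : ‖u‖ ≤ 1
    · rw [Set.indicator_of_mem (by simpa [Metric.mem_closedBall, dist_zero_right] using h)]
    · rw [Set.indicator_of_notMem (by simpa [Metric.mem_closedBall, dist_zero_right] using h)]
      simp [truncCauchy, h]
  rw [hmeq]
  refine IntegrableOn.integrable_indicator ?_ measurableSet_closedBall
  refine IntegrableOn.congr_fun
    (hcont.continuousOn.integrableOn_compact (isCompact_closedBall _ _)) ?_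
    measurableSet_closedBall
  intro u hu
  have h1 : ‖u‖ ≤ 1 := by simpa [Metric.mem_closedBall, dist_zero_right] using hu
  simp only [truncCauchy, if_pos h1]

lemma integral_comp_isometry {d : ℕ}
    (e : EuclideanSpace ℝ (Fin d) ≃ₗᵢ[ℝ] EuclideanSpace ℝ (Fin d))
    (g : EuclideanSpace ℝ (Fin d) → ℝ) :
    ∫ u, g (e u) = ∫ u, g u :=
  e.measurePreserving.integral_comp e.toHomeomorph.measurableEmbedding g

noncomputable def reflCoord {d : ℕ} (i : Fin d) :
    EuclideanSpace ℝ (Fin d) ≃ₗᵢ[ℝ] EuclideanSpace ℝ (Fin d) :=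
  LinearIsometryEquiv.piLpCongrRight 2
    (fun k => if k = i then LinearIsometryEquiv.neg ℝ else LinearIsometryEquiv.refl ℝ ℝ)

lemma reflCoord_apply {d : ℕ} (i : Fin d) (u : EuclideanSpace ℝ (Fin d)) (k : Fin d) :
    reflCoord i u k = if k = i then -(u k) else u k := by
  simp only [reflCoord, LinearIsometryEquiv.piLpCongrRight_apply, PiLp.toLp_apply]
  split <;> simp_all

noncomputable def swapCoord {d : ℕ} (a b : Fin d) :
    EuclideanSpace ℝ (Fin d) ≃ₗᵢ[ℝ] EuclideanSpace ℝ (Fin d) :=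
  LinearIsometryEquiv.piLpCongrLeft 2 ℝ ℝ (Equiv.swap a b)

lemma swapCoord_apply {d : ℕ} (a b : Fin d) (u : EuclideanSpace ℝ (Fin d)) (k : Fin d) :
    swapCoord a b u k = u (Equiv.swap a b k) := by
  simp only [swapCoord, LinearIsometryEquiv.piLpCongrLeft_apply, Equiv.piCongrLeft'_apply,
    Equiv.symm_swap]

lemma euclid_decomp {d : ℕ} (v : EuclideanSpace ℝ (Fin d)) :
    v = ∑ i, v i • EuclideanSpace.single i 1 := by
  have h := (EuclideanSpace.basisFun (Fin d) ℝ).sum_repr v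
  simp only [EuclideanSpace.basisFun_repr, EuclideanSpace.basisFun_apply] at h
  exact h.symm

lemma abs_coord_le_norm {d : ℕ} (u : EuclideanSpace ℝ (Fin d)) (i : Fin d) :
    |u i| ≤ ‖u‖ := by
  rw [EuclideanSpace.norm_eq, ← Real.sqrt_sq_eq_abs]
  apply Real.sqrt_le_sqrt
  have h := Finset.single_le_sum (f := fun k => ‖u k‖^2) (fun k _ => by positivity)
    (Finset.mem_univ i)
  simpa [Real.norm_eq_abs, sq_abs] using h

lemma eqOn_iteratedDerivWithin {g : ℝ → ℝ} (hg : ContDiff ℝ 3 g) {s : Set ℝ}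
    (hs : UniqueDiffOn ℝ s) : ∀ n : ℕ, n ≤ 3 →
    Set.EqOn (iteratedDerivWithin n g s) (iteratedDeriv n g) s := by
  intro n
  induction n with
  | zero => intro _ x hx; simp
  | succ n ih =>
    intro hn x hx
    have hlt : (n : WithTop ℕ∞) < 3 := by exact_mod_cast (by omega : n < 3)
    have hdiff : DifferentiableAt ℝ (iteratedDeriv n g) x :=
      (hg.differentiable_iteratedDeriv n hlt).differentiableAt
    rw [iteratedDerivWithin_succ,
      derivWithin_congr (ih (by omega)) (ih (by omega) hx),
      hdiff.derivWithin (hs x hx), iteratedDeriv_succ]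

lemma taylor_one_side {g : ℝ → ℝ} (hg : ContDiff ℝ 3 g) {M : ℝ}
    (hM : ∀ t, |iteratedDeriv 3 g t| ≤ M) :
    |g 1 - g 0 - deriv g 0 - deriv (deriv g) 0 / 2| ≤ M / 6 := by
  have h01 : (0:ℝ) < 1 := one_pos
  have hs : UniqueDiffOn ℝ (Set.Icc (0:ℝ) 1) := uniqueDiffOn_Icc h01
  have heq := eqOn_iteratedDerivWithin hg hs
  have hcd : ContDiffOn ℝ 2 g (Set.Icc 0 1) := (hg.of_le (by norm_num)).contDiffOn
  have hdiff : DifferentiableOn ℝ (iteratedDerivWithin 2 g (Set.Icc 0 1)) (Set.Ioo 0 1) := by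
    have h2 : Differentiable ℝ (iteratedDeriv 2 g) :=
      hg.differentiable_iteratedDeriv 2 (by exact_mod_cast (by omega : 2 < 3))
    exact (h2.differentiableOn).congr fun y hy => heq 2 (by omega) (Set.Ioo_subset_Icc_self hy)
  obtain ⟨t, ht, hexp⟩ := taylor_mean_remainder_lagrange (x₀ := 0) (x := 1) h01.ne
    (by rw [Set.uIcc_of_le h01.le]; exact hcd)
    (by rw [Set.uIcc_of_le h01.le, Set.uIoo_of_le h01.le]; exact hdiff)
  rw [Set.uIcc_of_le h01.le] at hexp
  rw [Set.uIoo_of_le h01.le] at ht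
  rw [taylor_within_apply] at hexp
  have e0 : iteratedDerivWithin 0 g (Set.Icc (0:ℝ) 1) 0 = g 0 := by simp
  have e1 : iteratedDerivWithin 1 g (Set.Icc (0:ℝ) 1) 0 = deriv g 0 := by
    rw [heq 1 (by omega) (Set.left_mem_Icc.mpr h01.le)]; simp [iteratedDeriv_one]
  have e2 : iteratedDerivWithin 2 g (Set.Icc (0:ℝ) 1) 0 = deriv (deriv g) 0 := by
    rw [heq 2 (by omega) (Set.left_mem_Icc.mpr h01.le)]
    simp [iteratedDeriv_succ, iteratedDeriv_one]
  have e3 : iteratedDerivWithin 3 g (Set.Icc (0:ℝ) 1) t = iteratedDeriv 3 g t :=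
    heq 3 (by omega) (Set.Ioo_subset_Icc_self ht)
  rw [Finset.sum_range_succ, Finset.sum_range_succ, Finset.sum_range_one, e0, e1, e2, e3] at hexp
  norm_num at hexp
  have hfact : ((Nat.factorial 3 : ℕ) : ℝ) = 6 := by norm_num [Nat.factorial]
  have : g 1 - g 0 - deriv g 0 - deriv (deriv g) 0 / 2 = iteratedDeriv 3 g t / 6 := by
    linarith [hexp]
  rw [this, abs_div, abs_of_pos (by norm_num : (0:ℝ) < 6)]
  exact div_le_div_of_nonneg_right (hM t) (by norm_num) |>.trans_eq rfl

lemma taylor_sym {g : ℝ → ℝ} (hg : ContDiff ℝ 3 g) {M : ℝ}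
    (hM : ∀ t, |iteratedDeriv 3 g t| ≤ M) :
    |g 1 - g (-1) - 2 * deriv g 0| ≤ M / 3 := by
  have h1 := taylor_one_side hg hM
  have hψc : ContDiff ℝ 3 (fun t : ℝ => g (-t)) := hg.comp (contDiff_neg)
  have hψM : ∀ t, |iteratedDeriv 3 (fun t : ℝ => g (-t)) t| ≤ M := by
    intro t
    rw [iteratedDeriv_comp_neg]
    rw [smul_eq_mul, abs_mul]
    simpa using hM (-t)
  have h2 := taylor_one_side hψc hψM
  have e0 : (fun t : ℝ => g (-t)) 1 = g (-1) := rfl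
  have e0' : (fun t : ℝ => g (-t)) 0 = g 0 := by norm_num
  have e1 : deriv (fun t : ℝ => g (-t)) 0 = -deriv g 0 := by
    rw [deriv_comp_neg g 0]; norm_num
  have e2 : deriv (deriv (fun t : ℝ => g (-t))) 0 = deriv (deriv g) 0 := by
    have hd : deriv (fun t : ℝ => g (-t)) = fun t => -deriv g (-t) :=
      funext fun t => deriv_comp_neg g t
    rw [hd]
    have : deriv (fun t : ℝ => -deriv g (-t)) 0 = -deriv (fun t : ℝ => deriv g (-t)) 0 :=
      deriv.neg
    rw [this, deriv_comp_neg (deriv g) 0]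
    norm_num
  rw [show (-(0:ℝ)) = 0 by norm_num, e1, e2] at h2
  have key : g 1 - g (-1) - 2 * deriv g 0 =
      (g 1 - g 0 - deriv g 0 - deriv (deriv g) 0 / 2) -
      (g (-1) - g 0 - (-deriv g 0) - deriv (deriv g) 0 / 2) := by ring
  rw [key]
  calc |_ - _| ≤ |g 1 - g 0 - deriv g 0 - deriv (deriv g) 0 / 2| +
      |g (-1) - g 0 - (-deriv g 0) - deriv (deriv g) 0 / 2| := abs_sub _ _
    _ ≤ M / 6 + M / 6 := add_le_add h1 h2
    _ = M / 3 := by ring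

lemma hasDerivAt_line {d : ℕ} (g : EuclideanSpace ℝ (Fin d) → ℝ) (hg : Differentiable ℝ g)
    (x v : EuclideanSpace ℝ (Fin d)) (t : ℝ) :
    HasDerivAt (fun s : ℝ => g (x + s • v)) (fderiv ℝ g (x + t • v) v) t := by
  have h1 : HasDerivAt (fun s : ℝ => x + s • v) v t := by
    simpa using ((hasDerivAt_id t).smul_const v).const_add x
  exact (hg (x + t • v)).hasFDerivAt.comp_hasDerivAt t h1

lemma iteratedDeriv3_line {d : ℕ} {f : EuclideanSpace ℝ (Fin d) → ℝ}
    (hf : ContDiff ℝ 3 f) (x v : EuclideanSpace ℝ (Fin d)) (t : ℝ) :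
    iteratedDeriv 3 (fun s : ℝ => f (x + s • v)) t
      = iteratedFDeriv ℝ 3 f (x + t • v) (fun _ => v) := by
  have hF1 : ContDiff ℝ 2 (fderiv ℝ f) := hf.fderiv_right (by norm_num)
  have hF2 : ContDiff ℝ 1 (fderiv ℝ (fderiv ℝ f)) := hF1.fderiv_right (by norm_num)
  have hg1 : ContDiff ℝ 2 (fun y => fderiv ℝ f y v) := hF1.clm_apply contDiff_const
  -- compute fderiv of g1
  have d1 : ∀ z, fderiv ℝ (fun w => fderiv ℝ f w v) z = (fderiv ℝ (fderiv ℝ f) z).flip v := by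
    intro z
    rw [fderiv_clm_apply ((hF1.differentiable (by norm_num)) z) (differentiableAt_const v)]
    simp
  have hg2 : ContDiff ℝ 1 (fun z => fderiv ℝ (fderiv ℝ f) z v v) :=
    (hF2.clm_apply contDiff_const).clm_apply contDiff_const
  have hg1' : (fun z => fderiv ℝ (fun w => fderiv ℝ f w v) z v)
      = fun z => fderiv ℝ (fderiv ℝ f) z v v := by
    funext z; rw [d1 z]; simp
  -- fderiv of g2
  have d2 : ∀ y, fderiv ℝ (fun z => fderiv ℝ (fderiv ℝ f) z v v) y
      = ((fderiv ℝ (fderiv ℝ (fderiv ℝ f)) y).flip v).flip v := by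
    intro y
    have hc : DifferentiableAt ℝ (fun z => fderiv ℝ (fderiv ℝ f) z v) y :=
      ((hF2.clm_apply contDiff_const).differentiable (by norm_num)) y
    rw [fderiv_clm_apply hc (differentiableAt_const v)]
    have hcc : DifferentiableAt ℝ (fderiv ℝ (fderiv ℝ f)) y :=
      (hF2.differentiable (by norm_num)) y
    rw [fderiv_clm_apply hcc (differentiableAt_const v)]
    ext w
    simp
  -- derivative chain for φ
  have e1 : deriv (fun s : ℝ => f (x + s • v)) = fun s => fderiv ℝ f (x + s • v) v :=
    funext fun s => (hasDerivAt_line f (hf.differentiable (by norm_num)) x v s).deriv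
  have e2 : deriv (deriv (fun s : ℝ => f (x + s • v)))
      = fun s => fderiv ℝ (fderiv ℝ f) (x + s • v) v v := by
    rw [e1]
    funext s
    rw [(hasDerivAt_line _ (hg1.differentiable (by norm_num)) x v s).deriv]
    rw [congrFun hg1' (x + s • v)]
  have e3 : deriv (deriv (deriv (fun s : ℝ => f (x + s • v)))) t
      = fderiv ℝ (fderiv ℝ (fderiv ℝ f)) (x + t • v) v v v := by
    rw [e2, (hasDerivAt_line _ (hg2.differentiable one_ne_zero) x v t).deriv, d2]
    simp
  have e4 : iteratedDeriv 3 (fun s : ℝ => f (x + s • v)) t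
      = deriv (deriv (deriv (fun s : ℝ => f (x + s • v)))) t := by
    rw [iteratedDeriv_succ, iteratedDeriv_succ, iteratedDeriv_one]
  rw [e4, e3]
  -- now the iteratedFDeriv side
  rw [show (3 : ℕ) = 2 + 1 from rfl, iteratedFDeriv_succ_apply_right]
  rw [show (2 : ℕ) = 1 + 1 from rfl, iteratedFDeriv_succ_apply_right]
  rw [iteratedFDeriv_one_apply]
  simp [Fin.init]

lemma cubic_bound {d : ℕ}
    (T : ContinuousMultilinearMap ℝ (fun _ : Fin 3 => EuclideanSpace ℝ (Fin d)) ℝ) {B : ℝ}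
    (hT : ∀ i j k : Fin d, |T ![EuclideanSpace.single i 1, EuclideanSpace.single j 1,
      EuclideanSpace.single k 1]| ≤ B)
    (v : EuclideanSpace ℝ (Fin d)) :
    |T (fun _ => v)| ≤ B * (∑ i, |v i|) ^ 3 := by
  classical
  have hv : (fun _ : Fin 3 => v) = fun _ : Fin 3 => ∑ i, v i • EuclideanSpace.single i 1 := by
    funext s; exact euclid_decomp v
  rw [hv]
  have hsum : (T fun _ : Fin 3 => ∑ i, v i • EuclideanSpace.single i 1)
      = ∑ r : Fin 3 → Fin d, T (fun s => v (r s) • EuclideanSpace.single (r s) 1) :=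
    T.toMultilinearMap.map_sum (g := fun _ i => v i • EuclideanSpace.single i 1)
  rw [hsum]
  have hterm : ∀ r : Fin 3 → Fin d,
      |T (fun s => v (r s) • EuclideanSpace.single (r s) 1)| ≤ (∏ s, |v (r s)|) * B := by
    intro r
    have hsm : T (fun s => v (r s) • EuclideanSpace.single (r s) 1)
        = (∏ s, v (r s)) • T (fun s => EuclideanSpace.single (r s) 1) :=
      T.toMultilinearMap.map_smul_univ (fun s => v (r s))
        (fun s => EuclideanSpace.single (r s) 1)
    have hbase : (fun s : Fin 3 => EuclideanSpace.single (r s) (1:ℝ)) =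
        ![EuclideanSpace.single (r 0) 1, EuclideanSpace.single (r 1) 1,
          EuclideanSpace.single (r 2) 1] := by
      funext s; fin_cases s <;> rfl
    rw [hsm, smul_eq_mul, abs_mul, Finset.abs_prod, hbase]
    have hB : 0 ≤ ∏ s, |v (r s)| := Finset.prod_nonneg fun s _ => abs_nonneg _
    exact mul_le_mul_of_nonneg_left (hT (r 0) (r 1) (r 2)) hB
  calc |∑ r : Fin 3 → Fin d, T (fun s => v (r s) • EuclideanSpace.single (r s) 1)|
      ≤ ∑ r : Fin 3 → Fin d, |T (fun s => v (r s) • EuclideanSpace.single (r s) 1)| :=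
        Finset.abs_sum_le_sum_abs _ _
    _ ≤ ∑ r : Fin 3 → Fin d, (∏ s, |v (r s)|) * B :=
        Finset.sum_le_sum fun r _ => hterm r
    _ = (∑ i, |v i|) ^ 3 * B := by
        rw [← Finset.sum_mul]
        congr 1
        have := Finset.prod_univ_sum (t := fun _ : Fin 3 => (Finset.univ : Finset (Fin d)))
          (f := fun _ i => |v i|)
        rw [Fintype.piFinset_univ] at this
        rw [← this, Finset.prod_const, Finset.card_univ, Fintype.card_fin]
    _ = B * (∑ i, |v i|) ^ 3 := mul_comm _ _

lemma pointwise_est {d : ℕ} (hd : 0 < d) {f : EuclideanSpace ℝ (Fin d) → ℝ}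
    (hf : ContDiff ℝ 3 f) {B₁ : ℝ}
    (h3 : ∀ (y : EuclideanSpace ℝ (Fin d)) (i j k : Fin d),
      |iteratedFDeriv ℝ 3 f y
        ![EuclideanSpace.single i 1, EuclideanSpace.single j 1, EuclideanSpace.single k 1]| ≤ B₁)
    (x : EuclideanSpace ℝ (Fin d)) {δ : ℝ} (hδ : 0 < δ)
    {u : EuclideanSpace ℝ (Fin d)} (hu : ‖u‖ ≤ 1) :
    |(f (x + δ • u) - f (x - δ • u)) / (2 * δ) - fderiv ℝ f x u|
      ≤ B₁ * (d : ℝ) ^ 3 * δ ^ 2 / 6 := by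
  have hB : 0 ≤ B₁ := le_trans (abs_nonneg _) (h3 x ⟨0, hd⟩ ⟨0, hd⟩ ⟨0, hd⟩)
  set v : EuclideanSpace ℝ (Fin d) := δ • u with hv
  have hφ : ContDiff ℝ 3 (fun t : ℝ => f (x + t • v)) :=
    hf.comp (contDiff_const.add (contDiff_id.smul contDiff_const))
  have hM : ∀ t, |iteratedDeriv 3 (fun s : ℝ => f (x + s • v)) t| ≤ B₁ * ((d : ℝ) * δ) ^ 3 := by
    intro t
    rw [iteratedDeriv3_line hf x v t]
    refine (cubic_bound (iteratedFDeriv ℝ 3 f (x + t • v)) (fun i j k => h3 _ i j k) v).trans ?_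
    have hsum : ∑ i, |v i| ≤ (d : ℝ) * δ := by
      have : ∀ i : Fin d, |v i| ≤ δ := by
        intro i
        have h1 : v i = δ * u i := rfl
        rw [h1, abs_mul, abs_of_pos hδ]
        calc δ * |u i| ≤ δ * 1 := by
              have := (abs_coord_le_norm u i).trans hu
              nlinarith [abs_nonneg (u i)]
          _ = δ := mul_one δ
      calc ∑ i, |v i| ≤ ∑ _i : Fin d, δ := Finset.sum_le_sum fun i _ => this i
        _ = (d : ℝ) * δ := by rw [Finset.sum_const, Finset.card_univ, Fintype.card_fin,
              nsmul_eq_mul]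
    have h0 : 0 ≤ ∑ i, |v i| := Finset.sum_nonneg fun i _ => abs_nonneg _
    exact mul_le_mul_of_nonneg_left (pow_le_pow_left₀ h0 hsum 3) hB
  have hkey0 := taylor_sym hφ hM
  have e3 : deriv (fun t : ℝ => f (x + t • v)) 0 = δ * fderiv ℝ f x u := by
    rw [(hasDerivAt_line f (hf.differentiable (by norm_num)) x v 0).deriv]
    simp [hv]
  have hkey : |f (x + v) - f (x - v) - 2 * (δ * fderiv ℝ f x u)| ≤ B₁ * ((d:ℝ) * δ) ^ 3 / 3 := by
    simpa only [one_smul, neg_one_smul, ← sub_eq_add_neg, e3] using hkey0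
  have key2 : (f (x + v) - f (x - v)) / (2 * δ) - fderiv ℝ f x u
      = (f (x + v) - f (x - v) - 2 * (δ * fderiv ℝ f x u)) / (2 * δ) := by
    field_simp
  rw [key2, abs_div, abs_of_pos (by positivity : (0:ℝ) < 2 * δ)]
  rw [div_le_iff₀ (by positivity : (0:ℝ) < 2 * δ)]
  calc |f (x + v) - f (x - v) - 2 * (δ * fderiv ℝ f x u)|
      ≤ B₁ * ((d : ℝ) * δ) ^ 3 / 3 := hkey
    _ = B₁ * (d : ℝ) ^ 3 * δ ^ 2 / 6 * (2 * δ) := by ring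

lemma J_zero {d : ℕ} {c₁ : ℝ} {i j : Fin d} (hij : i ≠ j) :
    ∫ u : EuclideanSpace ℝ (Fin d),
      truncCauchy d c₁ 1 u * (u i * (((d : ℝ) + 1) * u j / (1 + ‖u‖ ^ 2))) = 0 := by
  set G : EuclideanSpace ℝ (Fin d) → ℝ :=
    fun u => truncCauchy d c₁ 1 u * (u i * (((d : ℝ) + 1) * u j / (1 + ‖u‖ ^ 2))) with hG
  have key := integral_comp_isometry (reflCoord i) G
  have hneg : ∀ u, G (reflCoord i u) = - G u := by
    intro u
    have h1 : truncCauchy d c₁ 1 (reflCoord i u) = truncCauchy d c₁ 1 u :=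
      truncCauchy_eq_of_norm_eq ((reflCoord i).norm_map u)
    have h2 : reflCoord i u i = -(u i) := by rw [reflCoord_apply]; simp
    have h3 : reflCoord i u j = u j := by rw [reflCoord_apply, if_neg (by simpa using hij.symm)]
    have h4 : ‖reflCoord i u‖ = ‖u‖ := (reflCoord i).norm_map u
    simp only [hG, h1, h2, h3, h4]
    ring
  rw [show (fun u => G (reflCoord i u)) = fun u => - G u from funext hneg] at key
  rw [integral_neg] at key
  linarith

lemma J_diag {d : ℕ} {c₁ : ℝ} (j j0 : Fin d) :
    ∫ u : EuclideanSpace ℝ (Fin d),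
      truncCauchy d c₁ 1 u * (u j * (((d : ℝ) + 1) * u j / (1 + ‖u‖ ^ 2)))
    = ∫ u : EuclideanSpace ℝ (Fin d),
      truncCauchy d c₁ 1 u * (((d : ℝ) + 1) * (u j0) ^ 2 / (1 + ‖u‖ ^ 2)) := by
  set G : EuclideanSpace ℝ (Fin d) → ℝ :=
    fun u => truncCauchy d c₁ 1 u * (u j * (((d : ℝ) + 1) * u j / (1 + ‖u‖ ^ 2))) with hG
  have key := integral_comp_isometry (swapCoord j j0) G
  have heq : ∀ u : EuclideanSpace ℝ (Fin d), G (swapCoord j j0 u)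
      = truncCauchy d c₁ 1 u * (((d : ℝ) + 1) * (u j0) ^ 2 / (1 + ‖u‖ ^ 2)) := by
    intro u
    have h1 : truncCauchy d c₁ 1 (swapCoord j j0 u) = truncCauchy d c₁ 1 u :=
      truncCauchy_eq_of_norm_eq ((swapCoord j j0).norm_map u)
    have h2 : swapCoord j j0 u j = u j0 := by rw [swapCoord_apply, Equiv.swap_apply_left]
    have h4 : ‖swapCoord j j0 u‖ = ‖u‖ := (swapCoord j j0).norm_map u
    simp only [hG, h1, h2, h4]
    ring
  rw [show (fun u => G (swapCoord j j0 u)) = _ from funext heq] at key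
  exact key.symm

/-- Coordinatewise bias bound for the balanced (two-sided) truncated-Cauchy estimator:
`|E_u[((f(x+δu) − f(x−δu))/(2δ))·(d+1)u_j/(1+‖u‖²)] − c₂·∂_j f(x)| ≤ c₂″δ²`
with `c₂″ = B₁d⁴/3`. -/
theorem balanced_estimator_bias
    (d : ℕ) (hd : 0 < d) (c₁ : ℝ) (hc₁ : 0 < c₁)
    (hnorm : ∫ u : EuclideanSpace ℝ (Fin d), truncCauchy d c₁ 1 u = 1)
    (f : EuclideanSpace ℝ (Fin d) → ℝ) (B₁ : ℝ)
    (hf : ContDiff ℝ 3 f)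
    (h3 : ∀ (y : EuclideanSpace ℝ (Fin d)) (i j k : Fin d),
      |iteratedFDeriv ℝ 3 f y
        ![EuclideanSpace.single i 1, EuclideanSpace.single j 1, EuclideanSpace.single k 1]| ≤ B₁)
    (c₂ c₂'' : ℝ)
    (hc₂ : c₂ = ∫ u : EuclideanSpace ℝ (Fin d),
      truncCauchy d c₁ 1 u * (((d : ℝ) + 1) * (u ⟨0, hd⟩) ^ 2 / (1 + ‖u‖ ^ 2)))
    (hc₂'' : c₂'' = B₁ * (d : ℝ) ^ 4 / 3)
    (x : EuclideanSpace ℝ (Fin d)) (δ : ℝ) (hδ : 0 < δ) (j : Fin d) :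
    |(∫ u : EuclideanSpace ℝ (Fin d),
        truncCauchy d c₁ 1 u *
          ((f (x + δ • u) - f (x - δ • u)) / (2 * δ) * (((d : ℝ) + 1) * u j / (1 + ‖u‖ ^ 2))))
      - c₂ * gradient f x j| ≤ c₂'' * δ ^ 2 := by
  classical
  have hB : 0 ≤ B₁ := le_trans (abs_nonneg _) (h3 x ⟨0, hd⟩ ⟨0, hd⟩ ⟨0, hd⟩)
  have hd1 : (1 : ℝ) ≤ (d : ℝ) := by exact_mod_cast hd
  -- continuity facts
  have hcoord : ∀ i : Fin d, Continuous fun u : EuclideanSpace ℝ (Fin d) => u i := fun i =>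
    (EuclideanSpace.proj (𝕜 := ℝ) i).continuous
  have hWc : Continuous fun u : EuclideanSpace ℝ (Fin d) =>
      ((d : ℝ) + 1) * u j / (1 + ‖u‖ ^ 2) := by
    refine Continuous.div (continuous_const.mul (hcoord j)) (by fun_prop) ?_
    intro u; positivity
  have hGc : Continuous fun u : EuclideanSpace ℝ (Fin d) =>
      (f (x + δ • u) - f (x - δ • u)) / (2 * δ) := by
    apply Continuous.div_const
    exact (hf.continuous.comp (continuous_const.add (continuous_id.const_smul δ))).sub
      (hf.continuous.comp (continuous_const.sub (continuous_id.const_smul δ)))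
  have hLc : Continuous fun u : EuclideanSpace ℝ (Fin d) => fderiv ℝ f x u :=
    (fderiv ℝ f x).continuous
  -- integrability facts
  have hint1 : Integrable (fun u : EuclideanSpace ℝ (Fin d) => truncCauchy d c₁ 1 u *
      ((f (x + δ • u) - f (x - δ • u)) / (2 * δ) * (((d : ℝ) + 1) * u j / (1 + ‖u‖ ^ 2)))) :=
    truncCauchy_mul_integrable (hGc.mul hWc)
  have hint2 : Integrable (fun u : EuclideanSpace ℝ (Fin d) => truncCauchy d c₁ 1 u *
      (fderiv ℝ f x u * (((d : ℝ) + 1) * u j / (1 + ‖u‖ ^ 2)))) :=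
    truncCauchy_mul_integrable (hLc.mul hWc)
  have hinti : ∀ i : Fin d, Integrable (fun u : EuclideanSpace ℝ (Fin d) =>
      truncCauchy d c₁ 1 u * (u i * (((d : ℝ) + 1) * u j / (1 + ‖u‖ ^ 2)))) := fun i =>
    truncCauchy_mul_integrable ((hcoord i).mul hWc)
  -- gradient coordinate
  have hgrad : gradient f x j = fderiv ℝ f x (EuclideanSpace.single j 1) := by
    have hgdef : gradient f x = (InnerProductSpace.toDual ℝ
        (EuclideanSpace ℝ (Fin d))).symm (fderiv ℝ f x) := rfl
    have h1 : inner ℝ (gradient f x) (EuclideanSpace.single j (1:ℝ))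
        = fderiv ℝ f x (EuclideanSpace.single j 1) := by
      rw [hgdef]; exact InnerProductSpace.toDual_symm_apply
    have h2 : inner ℝ (gradient f x) (EuclideanSpace.single j (1:ℝ))
        = (gradient f x) j := by
      rw [EuclideanSpace.inner_single_right]; simp
    exact h2.symm.trans h1
  -- the linear term integral
  have hdecomp : ∀ u : EuclideanSpace ℝ (Fin d),
      fderiv ℝ f x u = ∑ i, u i * fderiv ℝ f x (EuclideanSpace.single i 1) := by
    intro u
    conv_lhs => rw [euclid_decomp u]
    rw [map_sum]
    exact Finset.sum_congr rfl fun i _ => by rw [ContinuousLinearMap.map_smul, smul_eq_mul]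
  have hI2 : (∫ u : EuclideanSpace ℝ (Fin d), truncCauchy d c₁ 1 u *
      (fderiv ℝ f x u * (((d : ℝ) + 1) * u j / (1 + ‖u‖ ^ 2))))
      = c₂ * gradient f x j := by
    have e1 : (fun u : EuclideanSpace ℝ (Fin d) => truncCauchy d c₁ 1 u *
        (fderiv ℝ f x u * (((d : ℝ) + 1) * u j / (1 + ‖u‖ ^ 2))))
        = fun u => ∑ i, fderiv ℝ f x (EuclideanSpace.single i 1) *
          (truncCauchy d c₁ 1 u * (u i * (((d : ℝ) + 1) * u j / (1 + ‖u‖ ^ 2)))) := by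
      funext u
      rw [hdecomp u, Finset.sum_mul, Finset.mul_sum]
      exact Finset.sum_congr rfl fun i _ => by ring
    rw [e1, integral_finset_sum _ fun i _ => (hinti i).const_mul _]
    have e2 : ∀ i : Fin d, (∫ u : EuclideanSpace ℝ (Fin d),
        fderiv ℝ f x (EuclideanSpace.single i 1) *
          (truncCauchy d c₁ 1 u * (u i * (((d : ℝ) + 1) * u j / (1 + ‖u‖ ^ 2)))))
        = fderiv ℝ f x (EuclideanSpace.single i 1) *
          ∫ u : EuclideanSpace ℝ (Fin d),
            truncCauchy d c₁ 1 u * (u i * (((d : ℝ) + 1) * u j / (1 + ‖u‖ ^ 2))) := fun i =>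
      integral_const_mul _ _
    rw [Finset.sum_congr rfl fun i _ => e2 i]
    rw [Finset.sum_eq_single j]
    · rw [J_diag j ⟨0, hd⟩, ← hc₂, hgrad]
      ring
    · intro i _ hij
      rw [J_zero hij, mul_zero]
    · intro hj; exact absurd (Finset.mem_univ j) hj
  -- split
  have hsplit : (∫ u : EuclideanSpace ℝ (Fin d), truncCauchy d c₁ 1 u *
        ((f (x + δ • u) - f (x - δ • u)) / (2 * δ) * (((d : ℝ) + 1) * u j / (1 + ‖u‖ ^ 2))))
      - (∫ u : EuclideanSpace ℝ (Fin d), truncCauchy d c₁ 1 u *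
        (fderiv ℝ f x u * (((d : ℝ) + 1) * u j / (1 + ‖u‖ ^ 2))))
      = ∫ u : EuclideanSpace ℝ (Fin d), truncCauchy d c₁ 1 u *
          (((f (x + δ • u) - f (x - δ • u)) / (2 * δ) - fderiv ℝ f x u) *
            (((d : ℝ) + 1) * u j / (1 + ‖u‖ ^ 2))) := by
    rw [← integral_sub hint1 hint2]
    congr 1
    funext u
    ring
  -- bound
  have hbound : |∫ u : EuclideanSpace ℝ (Fin d), truncCauchy d c₁ 1 u *
      (((f (x + δ • u) - f (x - δ • u)) / (2 * δ) - fderiv ℝ f x u) *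
        (((d : ℝ) + 1) * u j / (1 + ‖u‖ ^ 2)))| ≤ c₂'' * δ ^ 2 := by
    have hbdint : Integrable (fun u : EuclideanSpace ℝ (Fin d) =>
        truncCauchy d c₁ 1 u * (c₂'' * δ ^ 2)) :=
      truncCauchy_mul_integrable continuous_const
    have hae : ∀ u : EuclideanSpace ℝ (Fin d),
        ‖truncCauchy d c₁ 1 u * (((f (x + δ • u) - f (x - δ • u)) / (2 * δ) - fderiv ℝ f x u) *
          (((d : ℝ) + 1) * u j / (1 + ‖u‖ ^ 2)))‖ ≤ truncCauchy d c₁ 1 u * (c₂'' * δ ^ 2) := by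
      intro u
      rw [Real.norm_eq_abs, abs_mul, abs_of_nonneg (truncCauchy_nonneg hc₁ u)]
      by_cases hu : ‖u‖ ≤ 1
      · refine mul_le_mul_of_nonneg_left ?_ (truncCauchy_nonneg hc₁ u)
        rw [abs_mul]
        have hA := pointwise_est hd hf h3 x hδ hu
        have hWb : |((d : ℝ) + 1) * u j / (1 + ‖u‖ ^ 2)| ≤ (d : ℝ) + 1 := by
          rw [abs_div, abs_of_pos (by positivity : (0:ℝ) < 1 + ‖u‖ ^ 2),
            div_le_iff₀ (by positivity : (0:ℝ) < 1 + ‖u‖ ^ 2)]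
          rw [abs_mul, abs_of_pos (by positivity : (0:ℝ) < (d : ℝ) + 1)]
          have h5 : |u j| ≤ 1 := (abs_coord_le_norm u j).trans hu
          nlinarith [sq_nonneg ‖u‖, abs_nonneg (u j)]
        calc |(f (x + δ • u) - f (x - δ • u)) / (2 * δ) - fderiv ℝ f x u| *
              |((d : ℝ) + 1) * u j / (1 + ‖u‖ ^ 2)|
            ≤ (B₁ * (d : ℝ) ^ 3 * δ ^ 2 / 6) * ((d : ℝ) + 1) :=
              mul_le_mul hA hWb (abs_nonneg _) (by positivity)
          _ ≤ c₂'' * δ ^ 2 := by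
              rw [hc₂'']
              nlinarith [mul_nonneg hB (sq_nonneg δ), sq_nonneg δ,
                mul_nonneg (mul_nonneg hB (sq_nonneg δ)) (pow_nonneg (by positivity) 3 :
                  (0:ℝ) ≤ (d:ℝ)^3)]
      · rw [truncCauchy_of_norm_gt hu]
        simp
    calc |∫ u : EuclideanSpace ℝ (Fin d), truncCauchy d c₁ 1 u *
        (((f (x + δ • u) - f (x - δ • u)) / (2 * δ) - fderiv ℝ f x u) *
          (((d : ℝ) + 1) * u j / (1 + ‖u‖ ^ 2)))|
        ≤ ∫ u : EuclideanSpace ℝ (Fin d), truncCauchy d c₁ 1 u * (c₂'' * δ ^ 2) := by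
          rw [← Real.norm_eq_abs]
          exact norm_integral_le_of_norm_le hbdint (Eventually.of_forall hae)
      _ = (∫ u : EuclideanSpace ℝ (Fin d), truncCauchy d c₁ 1 u) * (c₂'' * δ ^ 2) :=
          integral_mul_const _ _
      _ = c₂'' * δ ^ 2 := by rw [hnorm, one_mul]
  rw [← hI2, hsplit]
  exact hbound
end
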